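/- arXiv:1602.00127 — 4 statements merged into one kernel-verified Lean document; each statement's English description precedes it below -/
import Mathlib

section
/- Let A be an essentially small Hom-finite R-linear additive category and M a finitely presented right A-module with projective presentation P_{a1} → P_{a0} → M → 0 induced by a morphism f : a1 → a0 in A. Then Hom_A(M, P_a) = 0 for all objects a of A if and only if f is an epimorphism in A. -/
set_option linter.unusedVariables false

/-!  Common setup: modules over a small R-linear category, finite presentation,
duality, dimensions, d-abelian categories, cluster tilting, etc.  -/

open CategoryTheory CategoryTheory.Limits Opposite

universe u

noncomputable section

namespace DP

variable (R : Type u) [CommRing R]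

/-- An `R`-linear structure on the opposite category. -/
instance oppositeLinear (A : Type u) [SmallCategory A] [Preadditive A]
    [CategoryTheory.Linear R A] : CategoryTheory.Linear R Aᵒᵖ where
  homModule X Y :=
    { smul := fun r f => (r • f.unop).op
      one_smul := fun f => Quiver.Hom.unop_inj (one_smul _ _)
      mul_smul := fun r s f => Quiver.Hom.unop_inj (mul_smul _ _ _)
      smul_zero := fun r => Quiver.Hom.unop_inj (smul_zero _)
      smul_add := fun r f g => Quiver.Hom.unop_inj (smul_add _ _ _)
      add_smul := fun r s f => Quiver.Hom.unop_inj (add_smul _ _ _)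
      zero_smul := fun f => Quiver.Hom.unop_inj (zero_smul _ _) }
  smul_comp X Y Z r f g := Quiver.Hom.unop_inj (CategoryTheory.Linear.comp_smul _ _ _ _ _ _)
  comp_smul X Y Z f r g := Quiver.Hom.unop_inj (CategoryTheory.Linear.smul_comp _ _ _ _ _ _)

variable (A : Type u) [SmallCategory A] [Preadditive A] [CategoryTheory.Linear R A]

/-- The category of (not necessarily finitely presented) right `A`-modules,
i.e. contravariant `R`-linear functors `A ⥤ Module R`. -/
abbrev Mdl : Type (u + 1) := Aᵒᵖ ⥤ ModuleCat.{u} R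

/-- The representable (finitely generated projective) module `P_a = A(-,a)`. -/
abbrev Pr (a : A) : Mdl R A := (linearYoneda R A).obj a

/-- The `A`-dual representable `P_a^* = A(a,-)`, a projective `Aᵒᵖ`-module. -/
abbrev PrS (a : A) : Mdl R Aᵒᵖ := (linearYoneda R Aᵒᵖ).obj (op a)

/-- The map `A(b,-) ⟶ A(a,-)` of `Aᵒᵖ`-modules induced by `f : a ⟶ b`. -/
abbrev dualMap {a b : A} (f : a ⟶ b) : PrS R A b ⟶ PrS R A a :=
  (linearYoneda R Aᵒᵖ).map f.op

variable {R A}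

/-- Pointwise exactness of a pair of composable morphisms of `A`-modules. -/
def ExactAt {L M N : Mdl R A} (f : L ⟶ M) (g : M ⟶ N) : Prop :=
  ∀ x : Aᵒᵖ, Function.Exact (f.app x) (g.app x)

/-- Pointwise injectivity (= being a monomorphism) of a morphism of `A`-modules. -/
def MonoPt {M N : Mdl R A} (f : M ⟶ N) : Prop :=
  ∀ x : Aᵒᵖ, Function.Injective (f.app x)

/-- Pointwise surjectivity (= being an epimorphism) of a morphism of `A`-modules. -/
def EpiPt {M N : Mdl R A} (f : M ⟶ N) : Prop :=
  ∀ x : Aᵒᵖ, Function.Surjective (f.app x)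

variable (R A)

/-- A module is finitely presented if it is the cokernel of a map of representables. -/
def FP (M : Mdl R A) : Prop :=
  ∃ (a₁ a₀ : A) (f : a₁ ⟶ a₀) (p : Pr R A a₀ ⟶ M),
    EpiPt p ∧ ExactAt ((linearYoneda R A).map f) p

/-- Finitely generated projective modules: direct summands of representables. -/
def FGProj (Q : Mdl R A) : Prop :=
  ∃ (a : A) (s : Q ⟶ Pr R A a) (r : Pr R A a ⟶ Q), s ≫ r = 𝟙 Q

/-- Injective objects of the category `mod A` of finitely presented `A`-modules. -/
def FPInjective (I : Mdl R A) : Prop :=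
  FP R A I ∧ ∀ (X Y : Mdl R A), FP R A X → FP R A Y → ∀ (i : X ⟶ Y), MonoPt i →
    ∀ g : X ⟶ I, ∃ h : Y ⟶ I, i ≫ h = g

/-- Hom-finiteness of an `R`-linear category. -/
def HomFinite : Prop := ∀ a b : A, Module.Finite R (a ⟶ b)

/-- The `E`-dual of an `A`-module, an `Aᵒᵖ`-module; for `E` the injective envelope of
`R/rad R` this is the duality `D` of Auslander–Reiten. -/
def DM (E : ModuleCat.{u} R) (M : Mdl R A) : Mdl R Aᵒᵖ :=
  M.op ⋙ (linearYoneda R (ModuleCat.{u} R)).obj E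

/-- The `E`-dual of an `Aᵒᵖ`-module, viewed as an `A`-module. -/
def DM2 (E : ModuleCat.{u} R) (N : Mdl R Aᵒᵖ) : Mdl R A :=
  (opOp A).op ⋙ N.op ⋙ (linearYoneda R (ModuleCat.{u} R)).obj E

/-- `E` is a finitely generated injective cogenerator; for `R` artinian the injective
envelope of `R/rad R` is such a module, and defines Matlis duality. -/
def GoodCogenerator (E : ModuleCat.{u} R) : Prop :=
  Injective E ∧ Module.Finite R E ∧
    ∀ (M : ModuleCat.{u} R) (x : M), x ≠ 0 → ∃ f : M ⟶ E, f x ≠ 0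

/-- A dualizing `R`-variety: an essentially small Hom-finite additive idempotent complete
`R`-category such that the duality `D = Hom_R(-,E)` exchanges finitely presented `A`-modules
and finitely presented `Aᵒᵖ`-modules. -/
structure IsDualizingVariety (E : ModuleCat.{u} R) : Prop where
  homFinite : HomFinite R A
  hasBiproducts : HasFiniteBiproducts A
  idemSplit : IsIdempotentComplete A
  cogen : GoodCogenerator R E
  dual_fp : ∀ M : Mdl R A, FP R A M → FP R Aᵒᵖ (DM R A E M)
  dual_fp_op : ∀ N : Mdl R Aᵒᵖ, FP R Aᵒᵖ N → FP R (Aᵒᵖ)ᵒᵖ (DM R Aᵒᵖ E N)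

/-- `Q ⟶ ⋯ ⟶ Q 0 ⟶ M ⟶ 0` is a resolution of `M` by finitely generated projectives. -/
def IsFGProjResolution (M : Mdl R A) (Q : ℕ → Mdl R A)
    (g : ∀ i, Q (i + 1) ⟶ Q i) (ε : Q 0 ⟶ M) : Prop :=
  (∀ i, FGProj R A (Q i)) ∧ EpiPt ε ∧ ExactAt (g 0) ε ∧ ∀ i, ExactAt (g (i + 1)) (g i)

/-- A resolution of `M` by representable modules `P_{a i}`. -/
def IsRepResolution (M : Mdl R A) (a : ℕ → A) (g : ∀ i, a (i + 1) ⟶ a i)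
    (ε : Pr R A (a 0) ⟶ M) : Prop :=
  (∀ i, g (i + 1) ≫ g i = 0) ∧ EpiPt ε ∧ ExactAt ((linearYoneda R A).map (g 0)) ε ∧
    ∀ i, ExactAt ((linearYoneda R A).map (g (i + 1))) ((linearYoneda R A).map (g i))

/-- Projective dimension at most `n`. -/
def PdimLE (M : Mdl R A) (n : ℕ) : Prop :=
  ∃ (Q : ℕ → Mdl R A) (g : ∀ i, Q (i + 1) ⟶ Q i) (ε : Q 0 ⟶ M),
    IsFGProjResolution R A M Q g ε ∧ ∀ i, n < i → IsZero (Q i)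

/-- Global dimension at most `n`: every finitely presented module has `pd ≤ n`. -/
def GldimLE (n : ℕ) : Prop := ∀ M : Mdl R A, FP R A M → PdimLE R A M n

/-- `M` lies in `⊥(A_A)`, i.e. `Hom_A(M, P) = 0` for every representable `P`. -/
def InPerpProj (M : Mdl R A) : Prop := ∀ (a : A) (f : M ⟶ Pr R A a), f = 0

section Ext

variable [HasExt.{u} (Mdl R A)]

/-- Vanishing of `Ext^k(M,X)` for all `1 ≤ k ≤ d`. -/
def ExtVanishLE (M X : Mdl R A) (d : ℕ) : Prop :=
  ∀ k, 1 ≤ k → k ≤ d → Subsingleton (Abelian.Ext M X k)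

/-- `M` lies in `⊥_d (A_A)`: `Ext^k(M,P) = 0` for `1 ≤ k ≤ d` and all representables. -/
def InPerpdProj (d : ℕ) (M : Mdl R A) : Prop := ∀ a : A, ExtVanishLE R A M (Pr R A a) d

end Ext

/-- Dominant dimension at least `d + 1`: each representable has an injective coresolution
whose first `d + 1` terms are projective. -/
def DomdimGE (d : ℕ) : Prop := ∀ a : A,
  ∃ (I : ℕ → Mdl R A) (η : Pr R A a ⟶ I 0) (f : ∀ i, I i ⟶ I (i + 1)),
    MonoPt η ∧ ExactAt η (f 0) ∧ (∀ i, ExactAt (f i) (f (i + 1))) ∧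
    (∀ i, FPInjective R A (I i)) ∧ ∀ i ≤ d, FGProj R A (I i)

/-- A `d`-Auslander pair of dimensions: `gldim A ≤ d + 1 ≤ domdim A`. -/
def IsDAuslander (d : ℕ) : Prop := GldimLE R A (d + 1) ∧ DomdimGE R A d

/-- An essential monomorphism (with test objects in `mod A`). -/
def IsEssentialMono {M I : Mdl R A} (η : M ⟶ I) : Prop :=
  MonoPt η ∧ ∀ Y : Mdl R A, FP R A Y → ∀ g : I ⟶ Y, MonoPt (η ≫ g) → MonoPt g

/-- An injective envelope in `mod A`. -/
def IsInjEnvelope {M I : Mdl R A} (η : M ⟶ I) : Prop :=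
  FPInjective R A I ∧ IsEssentialMono R A η

/-- A projective cover in `mod A`. -/
def IsProjCover {Q N : Mdl R A} (p : Q ⟶ N) : Prop :=
  FGProj R A Q ∧ EpiPt p ∧ ∀ Y : Mdl R A, FP R A Y → ∀ g : Y ⟶ Q, EpiPt (g ≫ p) → EpiPt g

/-- A minimal injective coresolution `0 ⟶ M ⟶ I 0 ⟶ I 1 ⟶ ⋯`. -/
def MinInjCores (M : Mdl R A) (I : ℕ → Mdl R A) (η : M ⟶ I 0)
    (f : ∀ i, I i ⟶ I (i + 1)) : Prop :=
  MonoPt η ∧ ExactAt η (f 0) ∧ (∀ i, ExactAt (f i) (f (i + 1))) ∧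
    (∀ i, FPInjective R A (I i)) ∧ IsEssentialMono R A η ∧
    ∀ i, IsEssentialMono R A (kernel.ι (f (i + 1)))

/-- `W` is a (first, minimal) syzygy of `M`. -/
def IsSyzygyOf (W M : Mdl R A) : Prop :=
  ∃ (Q : Mdl R A) (p : Q ⟶ M) (ι : W ⟶ Q), IsProjCover R A p ∧ MonoPt ι ∧ ExactAt ι p

/-- `W` is an `n`-th (minimal) syzygy of `M`. -/
def IsNthSyzygyOf (W M : Mdl R A) (n : ℕ) : Prop :=
  ∃ Y : ℕ → Mdl R A, Nonempty (Y 0 ≅ M) ∧ Nonempty (Y n ≅ W) ∧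
    ∀ i < n, IsSyzygyOf R A (Y (i + 1)) (Y i)

/-- `W` is a (first, minimal) cosyzygy of `M`. -/
def IsCosyzygyOf (W M : Mdl R A) : Prop :=
  ∃ (I : Mdl R A) (η : M ⟶ I) (π : I ⟶ W), IsInjEnvelope R A η ∧ EpiPt π ∧ ExactAt η π

/-- `W` is an `n`-th (minimal) cosyzygy of `M`. -/
def IsNthCosyzygyOf (W M : Mdl R A) (n : ℕ) : Prop :=
  ∃ Y : ℕ → Mdl R A, Nonempty (Y 0 ≅ M) ∧ Nonempty (Y n ≅ W) ∧
    ∀ i < n, IsCosyzygyOf R A (Y (i + 1)) (Y i)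

/-- `M` is a first syzygy, i.e. the kernel of a projective cover in `mod A`. -/
def InOmega (M : Mdl R A) : Prop :=
  ∃ (N Q : Mdl R A) (p : Q ⟶ N) (ι : M ⟶ Q),
    FP R A N ∧ IsProjCover R A p ∧ MonoPt ι ∧ ExactAt ι p

/-- Right approximations with respect to a subcategory (given by a predicate). -/
def ContravariantlyFinite (P : Mdl R A → Prop) : Prop :=
  ∀ M : Mdl R A, FP R A M → ∃ (B : Mdl R A) (f : B ⟶ M), P B ∧
    ∀ B' : Mdl R A, P B' → ∀ g : B' ⟶ M, ∃ h : B' ⟶ B, h ≫ f = g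

/-- Left approximations with respect to a subcategory (given by a predicate). -/
def CovariantlyFinite (P : Mdl R A → Prop) : Prop :=
  ∀ M : Mdl R A, FP R A M → ∃ (B : Mdl R A) (f : M ⟶ B), P B ∧
    ∀ B' : Mdl R A, P B' → ∀ g : M ⟶ B', ∃ h : B ⟶ B', f ≫ h = g

/-- Functorially finite subcategories of `mod A`. -/
def FunctoriallyFinite (P : Mdl R A → Prop) : Prop :=
  ContravariantlyFinite R A P ∧ CovariantlyFinite R A P

section DCT

variable [HasExt.{u} (Mdl R A)]

/-- `X ∈ ⊥_{d-1} P`. -/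
def InLeftPerp (P : Mdl R A → Prop) (d : ℕ) (X : Mdl R A) : Prop :=
  FP R A X ∧ ∀ M, P M → ∀ k, 1 ≤ k → k ≤ d - 1 → Subsingleton (Abelian.Ext X M k)

/-- `X ∈ P^{⊥_{d-1}}`. -/
def InRightPerp (P : Mdl R A → Prop) (d : ℕ) (X : Mdl R A) : Prop :=
  FP R A X ∧ ∀ M, P M → ∀ k, 1 ≤ k → k ≤ d - 1 → Subsingleton (Abelian.Ext M X k)

/-- `P` is a `d`-cluster-tilting subcategory of `mod A`. -/
def IsDCT (P : Mdl R A → Prop) (d : ℕ) : Prop :=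
  (∀ M, P M → FP R A M) ∧ FunctoriallyFinite R A P ∧
    (∀ X, P X ↔ InLeftPerp R A P d X) ∧ (∀ X, P X ↔ InRightPerp R A P d X)

end DCT

/-- `W` is the homology of `f : L ⟶ M`, `g : M ⟶ N` at `M` (in a module category). -/
def IsModHomologyOf {L M N : ModuleCat.{u} R} (f : L ⟶ M) (g : M ⟶ N)
    (W : ModuleCat.{u} R) : Prop :=
  ∃ (w : f ≫ g = 0) (π : kernel g ⟶ W),
    Function.Surjective π ∧ Function.Exact (kernel.lift g f w) π

/-- Precomposition `Hom(Y,W) ⟶ Hom(X,W)` as a morphism of `R`-modules. -/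
def preComp {X Y : Mdl R A} (f : X ⟶ Y) (W : Mdl R A) :
    ModuleCat.of R (Y ⟶ W) ⟶ ModuleCat.of R (X ⟶ W) :=
  ModuleCat.ofHom (CategoryTheory.Linear.leftComp R W f)

/-- Simple objects of `mod A`. -/
def IsSimpleMod (S : Mdl R A) : Prop :=
  FP R A S ∧ ¬ IsZero S ∧
    ∀ (N : Mdl R A) (ι : N ⟶ S), MonoPt ι → IsZero N ∨ EpiPt ι

/-- Chains `⋯ ⟶ X 2 ⟶ X 1 ⟶ X 0` in a category. -/
structure NChain (A : Type u) [SmallCategory A] where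
  X : ℕ → A
  f : ∀ i, X (i + 1) ⟶ X i

variable {A}

/-- The sequence `0 ⟶ X (d+1) ⟶ ⋯ ⟶ X 0` is left `d`-exact: it becomes exact
under every `A(x,-)`. -/
def NChain.LeftDExact (c : NChain A) (d : ℕ) : Prop :=
  ∀ x : A, (Function.Injective fun g : x ⟶ c.X (d + 1) => g ≫ c.f d) ∧
    ∀ i < d, Function.Exact (fun g : x ⟶ c.X (i + 2) => g ≫ c.f (i + 1))
      (fun g : x ⟶ c.X (i + 1) => g ≫ c.f i)

/-- The sequence `X (d+1) ⟶ ⋯ ⟶ X 0 ⟶ 0` is right `d`-exact: it becomes exact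
under every `A(-,x)`. -/
def NChain.RightDExact (c : NChain A) (d : ℕ) : Prop :=
  ∀ x : A, (Function.Injective fun g : c.X 0 ⟶ x => c.f 0 ≫ g) ∧
    ∀ i < d, Function.Exact (fun g : c.X i ⟶ x => c.f i ≫ g)
      (fun g : c.X (i + 1) ⟶ x => c.f (i + 1) ≫ g)

/-- A `d`-exact sequence `0 ⟶ X (d+1) ⟶ ⋯ ⟶ X 0 ⟶ 0`. -/
def NChain.DExact (c : NChain A) (d : ℕ) : Prop :=
  c.LeftDExact d ∧ c.RightDExact d

variable (A)

/-- A `d`-abelian category (Jasso): idempotent complete additive category with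
`d`-kernels, `d`-cokernels, and `d`-exact sequences for epis and monos. -/
structure IsDAbelian (d : ℕ) : Prop where
  idemSplit : IsIdempotentComplete A
  a1 : ∀ ⦃a₁ a₀ : A⦄ (f : a₁ ⟶ a₀), ∃ (c : NChain A) (e₁ : c.X 1 ≅ a₁) (e₀ : c.X 0 ≅ a₀),
    c.f 0 = e₁.hom ≫ f ≫ e₀.inv ∧ c.LeftDExact d
  a1op : ∀ ⦃a₁ a₀ : A⦄ (f : a₁ ⟶ a₀), ∃ (c : NChain A) (e₁ : c.X (d + 1) ≅ a₁)
    (e₀ : c.X d ≅ a₀), c.f d = e₁.hom ≫ f ≫ e₀.inv ∧ c.RightDExact d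
  a2 : ∀ ⦃a₁ a₀ : A⦄ (f : a₁ ⟶ a₀), Epi f → ∃ (c : NChain A) (e₁ : c.X 1 ≅ a₁)
    (e₀ : c.X 0 ≅ a₀), c.f 0 = e₁.hom ≫ f ≫ e₀.inv ∧ c.DExact d
  a2op : ∀ ⦃a₁ a₀ : A⦄ (f : a₁ ⟶ a₀), Mono f → ∃ (c : NChain A) (e₁ : c.X (d + 1) ≅ a₁)
    (e₀ : c.X d ≅ a₀), c.f d = e₁.hom ≫ f ≫ e₀.inv ∧ c.DExact d

/-- The `A`-dual module `M^* = Hom_A(M,-)|_A`, an `Aᵒᵖ`-module. -/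
def starMod (R : Type u) [CommRing R] (A : Type u) [SmallCategory A] [Preadditive A]
    [CategoryTheory.Linear R A] (M : Mdl R A) : Mdl R Aᵒᵖ :=
  unopUnop A ⋙ linearYoneda R A ⋙ (linearCoyoneda R (Mdl R A)).obj (Opposite.op M)

/-- The double `A`-dual module `M^{**}`, an `A`-module. -/
def doubleStar (R : Type u) [CommRing R] (A : Type u) [SmallCategory A] [Preadditive A]
    [CategoryTheory.Linear R A] (M : Mdl R A) : Mdl R A :=
  linearYoneda R Aᵒᵖ ⋙ (linearCoyoneda R (Mdl R Aᵒᵖ)).obj (Opposite.op (starMod R A M))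


instance mdlHasFiniteBiproducts (A : Type u) [SmallCategory A] [Preadditive A]
    [CategoryTheory.Linear R A] : HasFiniteBiproducts (Mdl R A) :=
  Limits.HasFiniteBiproducts.of_hasFiniteCoproducts

end DP

namespace DP

variable (R : Type u) [CommRing R] [IsArtinianRing R]


/-- for a finitely presented module `M` with projective presentation
`P_{a₁} → P_{a₀} → M → 0` induced by `f : a₁ ⟶ a₀`, one has `Hom_A(M, P_a) = 0`
for all objects `a` of `A` if and only if `f` is an epimorphism in `A`. -/
theorem stmt0 (A : Type u) [SmallCategory A] [Preadditive A] [CategoryTheory.Linear R A]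
    [HasFiniteBiproducts A] (hfin : HomFinite R A)
    (M : Mdl R A) (a₁ a₀ : A) (f : a₁ ⟶ a₀) (p : Pr R A a₀ ⟶ M)
    (hp : EpiPt p) (hex : ExactAt ((linearYoneda R A).map f) p) :
    (∀ (a : A) (u : M ⟶ Pr R A a), u = 0) ↔ Epi f := by
  have hzero : (linearYoneda R A).map f ≫ p = 0 := by
    apply NatTrans.ext
    funext x
    apply ModuleCat.hom_ext
    apply LinearMap.ext
    intro m
    exact (hex x).apply_apply_eq_zero m
  let S : ShortComplex (Mdl R A) := ShortComplex.mk ((linearYoneda R A).map f) p hzero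
  have hepi : Epi S.g := by
    have : ∀ x : Aᵒᵖ, Epi (S.g.app x) := fun x =>
      (ModuleCat.epi_iff_surjective _).mpr (hp x)
    exact NatTrans.epi_of_epi_app S.g
  have hS : S.Exact := by
    rw [ShortComplex.exact_iff_isZero_homology, Functor.isZero_iff]
    intro x
    let F := (CategoryTheory.evaluation Aᵒᵖ (ModuleCat.{u} R)).obj x
    have hmap : (S.map F).Exact := by
      rw [ShortComplex.moduleCat_exact_iff]
      intro m hm
      exact ((hex x) m).mp hm
    rw [ShortComplex.exact_iff_isZero_homology] at hmap
    exact hmap.of_iso (S.mapHomologyIso F).symm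
  constructor
  · intro h
    rw [Preadditive.epi_iff_cancel_zero]
    intro x g hg
    have hw : S.f ≫ (linearYoneda R A).map g = 0 := by
      show (linearYoneda R A).map f ≫ (linearYoneda R A).map g = 0
      rw [← Functor.map_comp, hg, Functor.map_zero]
    obtain ⟨u, hu⟩ := hS.desc' ((linearYoneda R A).map g) hw
    rw [h x u, comp_zero] at hu
    exact (linearYoneda R A).map_injective (by rw [← hu, Functor.map_zero])
  · intro hf a u
    obtain ⟨g, hg⟩ := (linearYoneda R A).map_surjective (p ≫ u)
    have h1 : f ≫ g = 0 := by
      apply (linearYoneda R A).map_injective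
      rw [Functor.map_comp, hg, Functor.map_zero, ← Category.assoc, hzero, zero_comp]
    have h2 : g = 0 := zero_of_epi_comp f h1
    have h3 : p ≫ u = 0 := by rw [← hg, h2, Functor.map_zero]
    exact zero_of_epi_comp S.g h3


end DP
end
end

section
/- Let A be a d-abelian category. Then the global dimension of A (as a ring-like additive category, i.e. the supremum of projective dimensions of finitely presented A-modules) is at most d+1, and likewise gldim A^op ≤ d+1. -/
set_option linter.unusedVariables false

/-!  Common setup: modules over a small R-linear category, finite presentation,
duality, dimensions, d-abelian categories, cluster tilting, etc.  -/

open CategoryTheory CategoryTheory.Limits Opposite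

universe u

noncomputable section

namespace DP

section Aux

open ZeroObject

variable {B : Type u} [SmallCategory B] [Preadditive B]

/-- Truncation of a sequence of objects: zero beyond `d+1`. -/
def trX [HasZeroObject B] (b₀ : ℕ → B) (d i : ℕ) : B :=
  if i ≤ d + 1 then b₀ i else 0

lemma trX_eq [HasZeroObject B] (b₀ : ℕ → B) {d i : ℕ} (h : i ≤ d + 1) :
    trX b₀ d i = b₀ i := if_pos h

lemma trX_isZero [HasZeroObject B] (b₀ : ℕ → B) {d i : ℕ} (h : d + 1 < i) :
    IsZero (trX b₀ d i) := by
  rw [trX, if_neg (by omega)]; exact isZero_zero B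

/-- Truncation of the maps. -/
def trF [HasZeroObject B] (b₀ : ℕ → B) (d : ℕ)
    (g₀ : ∀ i, i ≤ d → (b₀ (i + 1) ⟶ b₀ i)) (i : ℕ) :
    trX b₀ d (i + 1) ⟶ trX b₀ d i :=
  if h : i ≤ d then
    eqToHom (trX_eq b₀ (by omega)) ≫ g₀ i h ≫ eqToHom (trX_eq b₀ (by omega)).symm
  else 0

lemma trF_eq [HasZeroObject B] (b₀ : ℕ → B) (d : ℕ)
    (g₀ : ∀ i, i ≤ d → (b₀ (i + 1) ⟶ b₀ i)) {i : ℕ} (h : i ≤ d) :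
    trF b₀ d g₀ i =
      eqToHom (trX_eq b₀ (by omega)) ≫ g₀ i h ≫ eqToHom (trX_eq b₀ (by omega)).symm :=
  dif_pos h

lemma trF_zero [HasZeroObject B] (b₀ : ℕ → B) (d : ℕ)
    (g₀ : ∀ i, i ≤ d → (b₀ (i + 1) ⟶ b₀ i)) {i : ℕ} (h : ¬ i ≤ d) :
    trF b₀ d g₀ i = 0 := dif_neg h

/-- The abstract "every morphism has a `d`-kernel sequence padded by zeros" property. -/
def HasPaddedDKernels (B : Type u) [SmallCategory B] [Preadditive B] (d : ℕ) : Prop :=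
  ∀ ⦃a₁ a₀ : B⦄ (f : a₁ ⟶ a₀), ∃ (b : ℕ → B) (g : ∀ i, b (i + 1) ⟶ b i)
    (e₁ : b 1 ≅ a₁) (e₀ : b 0 ≅ a₀),
      g 0 = e₁.hom ≫ f ≫ e₀.inv ∧ (∀ i, d + 1 < i → IsZero (b i)) ∧
      (∀ x : B, Function.Injective fun h : x ⟶ b (d + 1) => h ≫ g d) ∧
      (∀ x : B, ∀ i, ∀ hi : i < d,
        Function.Exact (fun h : x ⟶ b (i + 2) => h ≫ g (i + 1))
          (fun h : x ⟶ b (i + 1) => h ≫ g i))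

lemma trunc_H [HasZeroObject B] (d : ℕ) {a₁ a₀ : B} (f : a₁ ⟶ a₀)
    (b₀ : ℕ → B) (g₀ : ∀ i, i ≤ d → (b₀ (i + 1) ⟶ b₀ i))
    (e₁ : b₀ 1 ≅ a₁) (e₀ : b₀ 0 ≅ a₀)
    (hf : g₀ 0 (Nat.zero_le d) = e₁.hom ≫ f ≫ e₀.inv)
    (hinj : ∀ x : B, Function.Injective fun h : x ⟶ b₀ (d + 1) => h ≫ g₀ d le_rfl)
    (hex : ∀ x : B, ∀ i, ∀ hi : i < d,
      Function.Exact (fun h : x ⟶ b₀ (i + 2) => h ≫ g₀ (i + 1) hi)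
        (fun h : x ⟶ b₀ (i + 1) => h ≫ g₀ i hi.le)) :
    ∃ (b : ℕ → B) (g : ∀ i, b (i + 1) ⟶ b i) (e₁' : b 1 ≅ a₁) (e₀' : b 0 ≅ a₀),
      g 0 = e₁'.hom ≫ f ≫ e₀'.inv ∧ (∀ i, d + 1 < i → IsZero (b i)) ∧
      (∀ x : B, Function.Injective fun h : x ⟶ b (d + 1) => h ≫ g d) ∧
      (∀ x : B, ∀ i, ∀ hi : i < d,
        Function.Exact (fun h : x ⟶ b (i + 2) => h ≫ g (i + 1))
          (fun h : x ⟶ b (i + 1) => h ≫ g i)) := by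
  refine ⟨trX b₀ d, trF b₀ d g₀,
    eqToIso (trX_eq b₀ (by omega)) ≪≫ e₁, eqToIso (trX_eq b₀ (by omega)) ≪≫ e₀,
    ?_, fun i hi => trX_isZero b₀ hi, ?_, ?_⟩
  · rw [trF_eq b₀ d g₀ (Nat.zero_le d), hf]
    simp
  · intro x y y' hyy
    rw [trF_eq b₀ d g₀ (le_refl d)] at hyy
    have h1 : (y ≫ eqToHom (trX_eq b₀ (by omega))) ≫ g₀ d le_rfl
        = (y' ≫ eqToHom (trX_eq b₀ (by omega))) ≫ g₀ d le_rfl := by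
      have := congrArg (fun t => t ≫ eqToHom (trX_eq b₀ (d := d) (i := d) (by omega))) hyy
      simpa using this
    have h2 := hinj x h1
    have := congrArg (fun t => t ≫ eqToHom (trX_eq b₀ (d := d) (i := d+1) (by omega)).symm) h2
    simpa using this
  · intro x i hi y
    rw [trF_eq b₀ d g₀ hi.le, trF_eq b₀ d g₀ (show i + 1 ≤ d from hi)]
    constructor
    · intro hy
      have h0 : (y ≫ eqToHom (trX_eq b₀ (by omega))) ≫ g₀ i hi.le = 0 := by
        have := congrArg (fun t => t ≫ eqToHom (trX_eq b₀ (d := d) (i := i) (by omega))) hy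
        simpa using this
      obtain ⟨h, hh⟩ := (hex x i hi _).mp h0
      refine ⟨h ≫ eqToHom (trX_eq b₀ (by omega)).symm, ?_⟩
      have := congrArg (fun t => t ≫ eqToHom (trX_eq b₀ (d := d) (i := i+1) (by omega)).symm) hh
      simpa using this
    · rintro ⟨h, rfl⟩
      have h0 : ((h ≫ eqToHom (trX_eq b₀ (by omega))) ≫ g₀ (i+1) hi) ≫ g₀ i hi.le = 0 :=
        (hex x i hi _).mpr ⟨h ≫ eqToHom (trX_eq b₀ (by omega)), rfl⟩
      have := congrArg (fun t => t ≫ eqToHom (trX_eq b₀ (d := d) (i := i) (by omega)).symm) h0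
      simp only [Category.assoc, eqToHom_trans, eqToHom_refl, eqToHom_trans_assoc,
        Category.comp_id, Category.id_comp, Limits.zero_comp, Limits.comp_zero] at this ⊢
      simpa using this


lemma fgproj_pr {R : Type u} [CommRing R] [CategoryTheory.Linear R B] (a : B) :
    FGProj R B (Pr R B a) :=
  ⟨a, 𝟙 _, 𝟙 _, by simp⟩

lemma isZero_pr {R : Type u} [CommRing R] [CategoryTheory.Linear R B] {a : B}
    (h : IsZero a) : IsZero (Pr R B a) := by
  refine Functor.isZero _ (fun x => ?_)
  have : Subsingleton ((Pr R B a).obj x) := ⟨fun f g => h.eq_of_tgt f g⟩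
  exact ModuleCat.isZero_of_subsingleton _

lemma key {R : Type u} [CommRing R] [CategoryTheory.Linear R B] (d : ℕ)
    (H : HasPaddedDKernels B d) : GldimLE R B (d + 1) := by
  intro M hM
  obtain ⟨a₁, a₀, f, p, hp, hexact⟩ := hM
  obtain ⟨b, g, e₁, e₀, hf, hz, hinj, hex⟩ := H f
  refine ⟨fun i => Pr R B (b i), fun i => (linearYoneda R B).map (g i),
    (linearYoneda R B).map e₀.hom ≫ p,
    ⟨fun i => fgproj_pr (b i), ?_, ?_, ?_⟩, fun i hi => isZero_pr (hz i hi)⟩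
  · -- EpiPt
    intro x y
    obtain ⟨v, hv⟩ := hp x y
    refine ⟨v ≫ e₀.inv, ?_⟩
    show p.app x ((v ≫ e₀.inv) ≫ e₀.hom) = y
    have e : ∀ w : x.unop ⟶ a₀, (w ≫ e₀.inv) ≫ e₀.hom = w := fun w => by simp
    exact (congrArg (fun (t : (Pr R B a₀).obj x) => p.app x t) (e v)).trans hv
  · -- ExactAt (g 0) ε
    intro x y
    constructor
    · intro hy
      have hy' : p.app x (y ≫ e₀.hom) = 0 := hy
      obtain ⟨v, hv⟩ := (hexact x (y ≫ e₀.hom)).mp hy'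
      have hv' : v ≫ f = y ≫ e₀.hom := hv
      refine ⟨v ≫ e₁.inv, ?_⟩
      show (v ≫ e₁.inv) ≫ g 0 = y
      rw [hf]
      have e : ∀ w : x.unop ⟶ a₁, (w ≫ e₁.inv) ≫ e₁.hom ≫ f ≫ e₀.inv = (w ≫ f) ≫ e₀.inv :=
        fun w => by simp
      have e2 : ∀ w : x.unop ⟶ b 0, (w ≫ e₀.hom) ≫ e₀.inv = w := fun w => by simp
      exact (e v).trans ((congrArg (· ≫ e₀.inv) hv').trans (e2 y))
    · rintro ⟨h, rfl⟩
      show p.app x ((h ≫ g 0) ≫ e₀.hom) = 0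
      rw [hf]
      refine (hexact x _).mpr ⟨h ≫ e₁.hom, ?_⟩
      show (h ≫ e₁.hom) ≫ f = _
      exact (fun w => by simp : ∀ w : x.unop ⟶ b 1,
        (w ≫ e₁.hom) ≫ f = (w ≫ e₁.hom ≫ f ≫ e₀.inv) ≫ e₀.hom) h
  · -- ExactAt (g (i+1)) (g i)
    intro i x y
    rcases lt_trichotomy i d with hi | rfl | hi
    · exact hex x.unop i hi y
    · constructor
      · intro hy
        have h0 : y ≫ g i = 0 := hy
        have hy0 : y = 0 := hinj x.unop (show y ≫ g i = (0 : x.unop ⟶ b (i+1)) ≫ g i by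
          rw [h0, Limits.zero_comp])
        exact ⟨0, by rw [map_zero, hy0]⟩
      · rintro ⟨h, rfl⟩
        have hh : h = (0 : x.unop ⟶ b (i + 2)) := (hz _ (by omega)).eq_of_tgt _ _
        show (((linearYoneda R B).map (g (i+1))).app x h) ≫ g i = 0
        rw [hh]
        show ((0 : x.unop ⟶ b (i+2)) ≫ g (i+1)) ≫ g i = 0
        rw [Limits.zero_comp, Limits.zero_comp]
    · have hy0 : y = (0 : x.unop ⟶ b (i + 1)) := (hz _ (by omega)).eq_of_tgt _ _
      constructor
      · intro _
        exact ⟨0, by rw [map_zero, hy0]; rfl⟩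
      · intro _
        show y ≫ g i = 0
        rw [hy0, Limits.zero_comp]


lemma inj_unop {A : Type u} [SmallCategory A] [Preadditive A] {x : Aᵒᵖ} {a b : A}
    (u : b ⟶ a) (h : Function.Injective fun g : a ⟶ x.unop => u ≫ g) :
    Function.Injective fun k : x ⟶ op a => k ≫ u.op := by
  intro y y' e
  apply Quiver.Hom.unop_inj
  apply h
  have := congrArg Quiver.Hom.unop e
  simpa using this

lemma exact_unop {A : Type u} [SmallCategory A] [Preadditive A] {x : Aᵒᵖ} {a b c' : A}
    (u : b ⟶ a) (v : c' ⟶ b)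
    (h : Function.Exact (fun g : a ⟶ x.unop => u ≫ g) (fun g : b ⟶ x.unop => v ≫ g)) :
    Function.Exact (fun k : x ⟶ op a => k ≫ u.op) (fun k : x ⟶ op b => k ≫ v.op) := by
  intro y
  constructor
  · intro hy
    obtain ⟨g', hg'⟩ := (h y.unop).mp (by simpa using congrArg Quiver.Hom.unop hy)
    exact ⟨g'.op, Quiver.Hom.unop_inj (by simpa using hg')⟩
  · rintro ⟨k, rfl⟩
    apply Quiver.Hom.unop_inj
    simpa using (h (u ≫ k.unop)).mpr ⟨k.unop, rfl⟩

lemma dAbelian_padded (A : Type u) [SmallCategory A] [Preadditive A] [HasZeroObject A]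
    (d : ℕ) (hab : IsDAbelian A d) : HasPaddedDKernels A d := by
  intro a₁ a₀ f
  obtain ⟨c, e₁, e₀, hf0, hld⟩ := hab.a1 f
  exact trunc_H d f c.X (fun i _ => c.f i) e₁ e₀ hf0 (fun x => (hld x).1)
    (fun x i hi => (hld x).2 i hi)

lemma NChain_f_congr {A : Type u} [SmallCategory A] (c : NChain A) {m n : ℕ} (h : m = n) :
    c.f n = eqToHom (show c.X (n + 1) = c.X (m + 1) by rw [h]) ≫ c.f m ≫
      eqToHom (show c.X m = c.X n by rw [h]) := by
  subst h; simp

lemma inj_conj {B : Type u} [SmallCategory B] {x A₂ A₁ B₂ B₁ : B}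
    (u : B₂ ⟶ B₁) (p : A₂ = B₂) (q : B₁ = A₁)
    (h : Function.Injective fun g : x ⟶ B₂ => g ≫ u) :
    Function.Injective fun g : x ⟶ A₂ => g ≫ eqToHom p ≫ u ≫ eqToHom q := by
  subst p; subst q; simpa using h

lemma exact_conj {B : Type u} [SmallCategory B] [Preadditive B] {x A₂ A₁ A₀ B₂ B₁ B₀ : B}
    (u : B₂ ⟶ B₁) (v : B₁ ⟶ B₀) (p₂ : A₂ = B₂) (q₁ : B₁ = A₁) (p₁ : A₁ = B₁) (q₀ : B₀ = A₀)
    (h : Function.Exact (fun g : x ⟶ B₂ => g ≫ u) (fun g : x ⟶ B₁ => g ≫ v)) :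
    Function.Exact (fun g : x ⟶ A₂ => g ≫ eqToHom p₂ ≫ u ≫ eqToHom q₁)
      (fun g : x ⟶ A₁ => g ≫ eqToHom p₁ ≫ v ≫ eqToHom q₀) := by
  subst p₂; subst q₁; subst q₀
  simpa using h

lemma dAbelian_padded_op (A : Type u) [SmallCategory A] [Preadditive A] [HasZeroObject A]
    (d : ℕ) (hab : IsDAbelian A d) : HasPaddedDKernels Aᵒᵖ d := by
  intro a₁ a₀ f
  obtain ⟨c, e₁, e₀, hfd, hrd⟩ := hab.a1op f.unop
  refine trunc_H d f (fun i => op (c.X (d + 1 - i)))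
    (fun i hi => eqToHom (congrArg (fun n => op (c.X n)) (by omega : d+1-(i+1) = d - i)) ≫
      (c.f (d - i)).op ≫
        eqToHom (congrArg (fun n => op (c.X n)) (by omega : d - i + 1 = d + 1 - i)))
    e₀.op.symm e₁.op.symm ?_ ?_ ?_
  · beta_reduce
    rw [NChain_f_congr c (show d = d - 0 from by omega), hfd]
    simp [eqToHom_map]
  · intro x
    simp only [NChain_f_congr c (show 0 = d - d from by omega), op_comp, eqToHom_op,
      Category.assoc, eqToHom_trans, eqToHom_trans_assoc]
    exact inj_conj _ _ _ (inj_unop (c.f 0) (hrd x.unop).1)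
  · intro x i hi
    simp only [NChain_f_congr c (show (d - (i+1)) + 1 = d - i from by omega), op_comp,
      eqToHom_op, Category.assoc, eqToHom_trans, eqToHom_trans_assoc]
    exact exact_conj _ _ _ _ _ _
      (exact_unop (c.f (d - (i+1))) (c.f (d - (i+1) + 1))
        ((hrd x.unop).2 (d - (i+1)) (by omega)))

end Aux
end DP

namespace DP

variable (R : Type u) [CommRing R] [IsArtinianRing R]


/-- a `d`-abelian category has global dimension at most `d + 1` on both
sides, the global dimension being computed in the category of finitely presented
functors. -/
theorem stmt5 (A : Type u) [SmallCategory A] [Preadditive A] [CategoryTheory.Linear R A]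
    [HasFiniteBiproducts A] (hfin : HomFinite R A)
    (d : ℕ) (hd : 1 ≤ d) (hab : IsDAbelian A d) :
    GldimLE R A (d + 1) ∧ GldimLE R Aᵒᵖ (d + 1) := by
  have hz : HasZeroObject A := by infer_instance
  exact ⟨key d (dAbelian_padded A d hab), key d (dAbelian_padded_op A d hab)⟩


end DP
end
end

section
/- Let A be a dualizing R-variety with gldim A ≤ d+1 such that ⊥A_A ⊆ ⊥_d A_A. Then ⊥A_A (the subcategory of finitely presented A-modules M with Hom_A(M, P) = 0 for all finitely generated projective P) is a Serre subcategory of mod A; in particular it is closed under subobjects, quotients, and extensions. -/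
set_option linter.unusedVariables false

/-!  Common setup: modules over a small R-linear category, finite presentation,
duality, dimensions, d-abelian categories, cluster tilting, etc.  -/

open CategoryTheory CategoryTheory.Limits Opposite

universe u

noncomputable section

namespace DP

variable (R : Type u) [CommRing R] [IsArtinianRing R]

section Aux

open CategoryTheory.Abelian

/-- Key homological lemma: if `Ext¹(X₃, Y) = 0` and `Hom(X₂, Y) = 0` for a short exact
sequence `0 → X₁ → X₂ → X₃ → 0`, then `Hom(X₁, Y) = 0`. -/
lemma ext_hom_vanish {C : Type*} [Category C] [Abelian C] [HasExt.{u} C]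
    {S : ShortComplex C} (hS : S.ShortExact) (Y : C)
    (h1 : ∀ x : Ext S.X₃ Y 1, x = 0)
    (h0 : ∀ u : S.X₂ ⟶ Y, u = 0)
    (h : S.X₁ ⟶ Y) : h = 0 := by
  letI := HasDerivedCategory.standard C
  obtain ⟨x₂, hx₂⟩ := Ext.contravariant_sequence_exact₁ hS Y (Ext.mk₀ h) (by omega) (h1 _)
  have e := congrArg Ext.hom hx₂
  rw [Ext.comp_hom, Ext.mk₀_hom, Ext.mk₀_hom, ShiftedHom.mk₀_comp] at e
  set D := DerivedCategory C
  set sf := DerivedCategory.singleFunctor C 0 with hsf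
  set H := DerivedCategory.homologyFunctor C 0 with hH
  set θ := (shiftFunctorZero' D ((0:ℕ):ℤ) (by simp)).hom.app (sf.obj Y) with hθ
  set γ : sf.obj S.X₂ ⟶ sf.obj Y := x₂.hom ≫ θ with hγ
  have e2 : sf.map S.f ≫ γ = sf.map h := by
    rw [hγ, ← Category.assoc, e, ShiftedHom.mk₀, Category.assoc, Iso.inv_hom_id_app]
    simp
    rfl
  have ι : sf ⋙ H ≅ 𝟭 C :=
    Functor.isoWhiskerRight ((SingleFunctors.evaluation _ _ (0:ℤ)).mapIso
      (DerivedCategory.singleFunctorsPostcompQIso C)) H ≪≫ Functor.associator _ _ _ ≪≫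
      Functor.isoWhiskerLeft (CochainComplex.singleFunctor C 0)
        (DerivedCategory.homologyFunctorFactors C 0) ≪≫
      HomologicalComplex.homologyFunctorSingleIso C (ComplexShape.up ℤ) 0
  have hψ : ι.inv.app S.X₂ ≫ H.map γ ≫ ι.hom.app Y = 0 := h0 _
  have hnat : h = ι.inv.app S.X₁ ≫ H.map (sf.map h) ≫ ι.hom.app Y := by
    have := ι.hom.naturality h
    simp only [Functor.comp_map] at this
    rw [this, ← Category.assoc, Iso.inv_hom_id_app]
    simp
  rw [hnat, ← e2, Functor.map_comp]
  calc ι.inv.app S.X₁ ≫ (H.map (sf.map S.f) ≫ H.map γ) ≫ ι.hom.app Y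
      = (ι.inv.app S.X₁ ≫ H.map (sf.map S.f) ≫ ι.hom.app S.X₂) ≫
          (ι.inv.app S.X₂ ≫ H.map γ ≫ ι.hom.app Y) := by
        simp only [Category.assoc, Iso.hom_inv_id_app_assoc]
    _ = 0 := by rw [hψ, Limits.comp_zero]

variable {R : Type u} [CommRing R] {A : Type u} [SmallCategory A] [Preadditive A]
  [CategoryTheory.Linear R A]

/-- A pointwise short exact sequence of `A`-modules is a short exact short complex. -/
lemma mk_shortExact {L M N : Mdl R A} (f : L ⟶ M) (g : M ⟶ N)
    (hf : MonoPt f) (hg : EpiPt g) (hfg : ExactAt f g) (w : f ≫ g = 0) :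
    (ShortComplex.mk f g w).ShortExact := by
  haveI : ∀ x, Mono (f.app x) := fun x => (ModuleCat.mono_iff_injective _).mpr (hf x)
  haveI : ∀ x, Epi (g.app x) := fun x => (ModuleCat.epi_iff_surjective _).mpr (hg x)
  haveI : Mono f := NatTrans.mono_of_mono_app f
  haveI : Epi g := NatTrans.epi_of_epi_app g
  refine ⟨?_⟩
  rw [ShortComplex.exact_iff_isZero_homology]
  apply Functor.isZero
  intro x
  have hx : ((ShortComplex.mk f g w).map ((evaluation Aᵒᵖ (ModuleCat.{u} R)).obj x)).Exact := by
    rw [ShortComplex.moduleCat_exact_iff]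
    intro m hm
    exact (hfg x m).mp hm
  rw [ShortComplex.exact_iff_isZero_homology] at hx
  exact hx.of_iso (ShortComplex.mapHomologyIso (ShortComplex.mk f g w)
    ((evaluation Aᵒᵖ (ModuleCat.{u} R)).obj x)).symm

end Aux



/-- if `gldim A ≤ d + 1` and `⊥A_A ⊆ ⊥_d A_A`, then `⊥A_A` is a Serre
subcategory of `mod A`: it is closed under subobjects, quotients and extensions. -/
theorem stmt7 (A : Type u) [SmallCategory A] [Preadditive A] [CategoryTheory.Linear R A]
    [HasExt.{u} (Mdl R A)]
    (E : ModuleCat.{u} R) (hdual : IsDualizingVariety R A E)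
    (d : ℕ) (hd : 1 ≤ d) (hgl : GldimLE R A (d + 1))
    (hperp : ∀ M : Mdl R A, FP R A M → InPerpProj R A M → InPerpdProj R A d M) :
    ∀ (L M N : Mdl R A), FP R A L → FP R A M → FP R A N →
      ∀ (f : L ⟶ M) (g : M ⟶ N), MonoPt f → EpiPt g → ExactAt f g →
        (InPerpProj R A M → InPerpProj R A L ∧ InPerpProj R A N) ∧
        (InPerpProj R A L → InPerpProj R A N → InPerpProj R A M) := by
  intro L M N hL hM hN f g hf hg hfg
  have w : f ≫ g = 0 := by
    ext x m
    exact (hfg x).apply_apply_eq_zero m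
  have hS : (ShortComplex.mk f g w).ShortExact := mk_shortExact f g hf hg hfg w
  haveI : Epi g := hS.epi_g
  constructor
  · intro hM'
    have hN' : InPerpProj R A N := by
      intro a k
      have hz : g ≫ k = 0 := hM' a (g ≫ k)
      rw [← cancel_epi g, hz, comp_zero]
    refine ⟨?_, hN'⟩
    intro a k
    have h1 : ∀ x : Abelian.Ext N (Pr R A a) 1, x = 0 := by
      haveI := hperp N hN hN' a 1 le_rfl hd
      exact fun x => Subsingleton.elim x 0
    exact ext_hom_vanish hS (Pr R A a) h1 (hM' a) k
  · intro hL' hN' a k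
    have hfk : f ≫ k = 0 := hL' a (f ≫ k)
    obtain ⟨l, hl⟩ := CokernelCofork.IsColimit.desc' hS.gIsCokernel k hfk
    have : l = 0 := hN' a l
    rw [← hl, this, comp_zero]



end DP
end
end

section
/- Let A be a d-Auslander dualizing R-variety, a ∈ A, and 0 → P_a → I^0 → ... → I^d → I^{d+1} → 0 a minimal injective coresolution of P_a. Let I^0(A) be the additive closure of injective envelopes of representable modules. Then I^k ∈ I^0(A) for all 0 ≤ k ≤ d, and I^0(A) ∩ add(I^{d+1}) = 0. -/
set_option linter.unusedVariables false

/-!  Common setup: modules over a small R-linear category, finite presentation,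
duality, dimensions, d-abelian categories, cluster tilting, etc.  -/

open CategoryTheory CategoryTheory.Limits Opposite

universe u

noncomputable section

namespace DP

variable (R : Type u) [CommRing R] [IsArtinianRing R]


variable (A : Type u) [SmallCategory A] [Preadditive A] [CategoryTheory.Linear R A]

/-- Membership in `I^0(A)`: the additive closure of the injective envelopes of the
representable modules. -/
def InI0 (J : Mdl R A) : Prop :=
  ∃ (n : ℕ) (b : Fin n → A) (Jv : Fin n → Mdl R A) (η : ∀ i, Pr R A (b i) ⟶ Jv i),
    (∀ i, IsInjEnvelope R A (η i)) ∧
    ∃ (s : J ⟶ ⨁ Jv) (r : (⨁ Jv) ⟶ J), s ≫ r = 𝟙 J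

/-- Membership in `add X`. -/
def InAddOf (X J : Mdl R A) : Prop :=
  ∃ (n : ℕ) (s : J ⟶ ⨁ fun _ : Fin n => X) (r : (⨁ fun _ : Fin n => X) ⟶ J), s ≫ r = 𝟙 J


section Helpers

set_option linter.unusedSectionVars false
set_option maxHeartbeats 1000000

variable {R : Type u} [CommRing R]
variable {A : Type u} [SmallCategory A] [Preadditive A] [CategoryTheory.Linear R A]

/-- elementwise equality from morphism equality -/
lemma hom_apply_eq {M N : Mdl R A} {f g : M ⟶ N} (h : f = g) (x : Aᵒᵖ)
    (u : M.obj x) : f.app x u = g.app x u := by rw [h]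

lemma comp_apply' {L M N : Mdl R A} (f : L ⟶ M) (g : M ⟶ N) (x : Aᵒᵖ)
    (u : L.obj x) : (f ≫ g).app x u = g.app x (f.app x u) := rfl

lemma nat_apply {M N : Mdl R A} (α : M ⟶ N) {x y : Aᵒᵖ} (φ : x ⟶ y)
    (u : M.obj x) : α.app y (M.map φ u) = N.map φ (α.app x u) := by
  have : (M.map φ ≫ α.app y) u = (α.app x ≫ N.map φ) u := by rw [α.naturality]
  exact this

lemma app_injective_of_ker {M N : Mdl R A} (f : M ⟶ N) (x : Aᵒᵖ)
    (h : ∀ u : M.obj x, f.app x u = 0 → u = 0) : Function.Injective (f.app x) := by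
  have := (LinearMap.ker_eq_bot' (f := (f.app x).hom)).2 h
  exact LinearMap.ker_eq_bot.1 this

/-- The basic Yoneda-style identity: a morphism out of a representable is determined by
its value at the identity. -/
lemma Pr_app {c : A} {M : Mdl R A} (θ : Pr R A c ⟶ M) (y : Aᵒᵖ) (g : y.unop ⟶ c) :
    θ.app y g = M.map g.op (θ.app (op c) (𝟙 c)) := by
  have h := nat_apply θ (x := op c) (y := y) g.op (𝟙 c)
  have h2 : ((Pr R A c).map (X := op c) (Y := y) g.op) (𝟙 c) = g := by
    show g ≫ 𝟙 c = g
    simp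
  rw [h2] at h
  exact h

lemma Pr_hom_ext {c : A} {M : Mdl R A} {θ θ' : Pr R A c ⟶ M}
    (h : θ.app (op c) (𝟙 c) = θ'.app (op c) (𝟙 c)) : θ = θ' := by
  apply NatTrans.ext
  funext y
  apply ModuleCat.hom_ext
  apply LinearMap.ext
  intro g
  rw [Pr_app θ y g, Pr_app θ' y g, h]

/-- Representables are finitely presented. -/
lemma FP_Pr (c : A) : FP R A (Pr R A c) := by
  refine ⟨c, c, 0, 𝟙 _, fun x => Function.surjective_id, fun x => ?_⟩
  intro g
  constructor
  · intro hg
    refine ⟨0, ?_⟩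
    show ((linearYoneda R A).map (0 : c ⟶ c)).app x 0 = g
    rw [map_zero]
    exact hg.symm
  · rintro ⟨w, rfl⟩
    show (((linearYoneda R A).map (0 : c ⟶ c)).app x w : x.unop ⟶ c) = 0
    show w ≫ (0 : c ⟶ c) = 0
    exact comp_zero

/-- pointwise linearity of the action of `M` on morphisms, on elements. -/
def EltLin (M : Mdl R A) : Prop :=
  ∀ (c : A) (y : Aᵒᵖ) (g h : y.unop ⟶ c) (r : R) (u : M.obj (op c)),
    M.map (r • g + h).op u = r • M.map g.op u + M.map h.op u

lemma eltLin_of_fp {M : Mdl R A} (hM : FP R A M) : EltLin M := by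
  obtain ⟨a₁, a₀, fM, p, hp, hex⟩ := hM
  intro c y g h r u
  obtain ⟨w, hw⟩ := hp (op c) u
  change c ⟶ a₀ at w
  have e1 : ∀ (g : y.unop ⟶ c), M.map g.op u = p.app y (g ≫ w) := by
    intro g
    rw [← hw]
    have := nat_apply p (x := op c) (y := y) g.op w
    rw [← this]
    rfl
  rw [e1, e1, e1]
  have e2 : (r • g + h) ≫ w = r • (g ≫ w) + h ≫ w := by
    rw [Preadditive.add_comp, CategoryTheory.Linear.smul_comp]
  rw [e2]
  exact (map_add (p.app y).hom _ _).trans (congrArg (· + _) (map_smul (p.app y).hom r _))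

/-- The morphism `Pr c ⟶ M` corresponding to an element `u : M(c)`. -/
def elt {M : Mdl R A} (hM : EltLin M) {c : A} (u : M.obj (op c)) : Pr R A c ⟶ M where
  app y :=
    ModuleCat.ofHom
    { toFun := fun g => M.map (Y := y) g.op u
      map_add' := by
        intro g h
        have := hM c y g h 1 u
        rw [one_smul, one_smul] at this
        exact this
      map_smul' := by
        intro r g
        have h0 : M.map (Y := y) (0 : y.unop ⟶ c).op u = 0 := by
          have := hM c y 0 0 1 u
          rw [one_smul, one_smul, add_zero] at this
          exact (left_eq_add.mp this)
        have := hM c y g 0 r u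
        rw [add_zero, h0, add_zero] at this
        exact this }
  naturality := by
    intro y z ψ
    apply ModuleCat.hom_ext
    apply LinearMap.ext
    intro g
    change y.unop ⟶ c at g
    show M.map (Y := z) (ψ.unop ≫ g).op u = M.map ψ (M.map (Y := y) g.op u)
    rw [op_comp, M.map_comp]
    rfl

lemma elt_app {M : Mdl R A} (hM : EltLin M) {c : A} (u : M.obj (op c)) (y : Aᵒᵖ)
    (g : y.unop ⟶ c) : (elt hM u).app y g = M.map (Y := y) g.op u := rfl

lemma elt_app_id {M : Mdl R A} (hM : EltLin M) {c : A} (u : M.obj (op c)) :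
    (elt hM u).app (op c) (𝟙 c) = u := by
  show M.map (𝟙 c).op u = u
  rw [op_id, M.map_id]
  rfl

end Helpers

section QB

set_option linter.unusedSectionVars false
set_option maxHeartbeats 1000000

variable {R : Type u} [CommRing R]
variable {A : Type u} [SmallCategory A] [Preadditive A] [CategoryTheory.Linear R A]

/-- Pointwise quotient of `M` by the image of a morphism from a representable. -/
def QB {M : Mdl R A} {c : A} (φ : Pr R A c ⟶ M) : Mdl R A where
  obj y := ModuleCat.of R (M.obj y ⧸ LinearMap.range (φ.app y).hom)
  map {y z} ψ := ModuleCat.ofHom (Submodule.mapQ _ _ (M.map ψ).hom (by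
    rintro _ ⟨g, rfl⟩
    exact ⟨(Pr R A c).map ψ g, nat_apply φ ψ g⟩))
  map_id y := by
    apply ModuleCat.hom_ext
    apply Submodule.linearMap_qext
    apply LinearMap.ext
    intro u
    show Submodule.Quotient.mk (M.map (𝟙 y) u) = Submodule.Quotient.mk u
    rw [M.map_id]
    rfl
  map_comp {x y z} ψ χ := by
    apply ModuleCat.hom_ext
    apply Submodule.linearMap_qext
    apply LinearMap.ext
    intro u
    show Submodule.Quotient.mk (M.map (ψ ≫ χ) u) = Submodule.Quotient.mk (M.map χ (M.map ψ u))
    rw [M.map_comp]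
    rfl

/-- The corresponding quotient projection. -/
def QBπ {M : Mdl R A} {c : A} (φ : Pr R A c ⟶ M) : M ⟶ QB φ where
  app y := ModuleCat.ofHom (LinearMap.range (φ.app y).hom).mkQ
  naturality {y z} ψ := by
    apply ModuleCat.hom_ext
    apply LinearMap.ext
    intro u
    show (LinearMap.range (φ.app z).hom).mkQ (M.map ψ u) = Submodule.mapQ
        (LinearMap.range (φ.app y).hom) (LinearMap.range (φ.app z).hom) (M.map ψ).hom
        (by rintro _ ⟨g, rfl⟩; exact ⟨(Pr R A c).map ψ g, nat_apply φ ψ g⟩)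
        ((LinearMap.range (φ.app y).hom).mkQ u)
    rw [Submodule.mkQ_apply, Submodule.mkQ_apply, Submodule.mapQ_apply]

lemma QBπ_surj {M : Mdl R A} {c : A} (φ : Pr R A c ⟶ M) (y : Aᵒᵖ) :
    Function.Surjective ((QBπ φ).app y) :=
  Submodule.Quotient.mk_surjective _

lemma QBπ_eq_zero_iff {M : Mdl R A} {c : A} (φ : Pr R A c ⟶ M) (y : Aᵒᵖ) (u : M.obj y) :
    (QBπ φ).app y u = 0 ↔ ∃ g : y.unop ⟶ c, φ.app y g = u := by
  show Submodule.Quotient.mk (p := LinearMap.range (φ.app y).hom) u = 0 ↔ _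
  rw [Submodule.Quotient.mk_eq_zero]
  exact LinearMap.mem_range

/-- Descending a morphism that kills the image. -/
def QBdesc {M N : Mdl R A} {c : A} (φ : Pr R A c ⟶ M) (G : M ⟶ N)
    (hG : ∀ (y : Aᵒᵖ) (g : y.unop ⟶ c), G.app y (φ.app y g) = 0) : QB φ ⟶ N where
  app y := ModuleCat.ofHom (Submodule.liftQ _ (G.app y).hom (by rintro _ ⟨g, rfl⟩; exact hG y g))
  naturality {y z} ψ := by
    apply ModuleCat.hom_ext
    apply Submodule.linearMap_qext
    apply LinearMap.ext
    intro u
    show G.app z (M.map ψ u) = N.map ψ (Submodule.liftQ _ (G.app y).hom _ (Submodule.Quotient.mk u))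
    rw [Submodule.liftQ_apply]
    exact nat_apply G ψ u

lemma QBπ_desc {M N : Mdl R A} {c : A} (φ : Pr R A c ⟶ M) (G : M ⟶ N)
    (hG : ∀ (y : Aᵒᵖ) (g : y.unop ⟶ c), G.app y (φ.app y g) = 0) :
    QBπ φ ≫ QBdesc φ G hG = G := by
  apply NatTrans.ext
  funext y
  apply ModuleCat.hom_ext
  apply LinearMap.ext
  intro u
  rfl

lemma QBdesc_apply {M N : Mdl R A} {c : A} (φ : Pr R A c ⟶ M) (G : M ⟶ N)
    (hG : ∀ (y : Aᵒᵖ) (g : y.unop ⟶ c), G.app y (φ.app y g) = 0) (y : Aᵒᵖ) (u : M.obj y) :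
    (QBdesc φ G hG).app y ((QBπ φ).app y u) = G.app y u := rfl

/-- Key closure property: the quotient of an f.p. module by the image of a morphism from a
representable is finitely presented. -/
lemma FP_QB [HasBinaryBiproducts A] {M : Mdl R A} (hM : FP R A M) {c : A}
    (φ : Pr R A c ⟶ M) : FP R A (QB φ) := by
  obtain ⟨a₁, a₀, fM, p, hp, hex⟩ := hM
  obtain ⟨w, hw⟩ := hp (op c) (φ.app (op c) (𝟙 c))
  change c ⟶ a₀ at w
  have hφval : ∀ (y : Aᵒᵖ) (g : y.unop ⟶ c), φ.app y g = p.app y (g ≫ w) := by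
    intro y g
    rw [Pr_app φ y g, ← hw]
    have := nat_apply p (x := op c) (y := y) g.op w
    rw [← this]
    rfl
  refine ⟨a₁ ⊞ c, a₀, biprod.desc fM w, p ≫ QBπ φ, ?_, ?_⟩
  · intro y
    exact (QBπ_surj φ y).comp (hp y)
  · intro y
    intro h
    change y.unop ⟶ a₀ at h
    constructor
    · intro hh
      obtain ⟨g, hg⟩ := (QBπ_eq_zero_iff φ y _).1 hh
      rw [hφval y g] at hg
      have hker : p.app y (h - g ≫ w) = 0 := by
        have h2 : p.app y (h - g ≫ w) = p.app y h - p.app y (g ≫ w) :=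
          map_sub (p.app y).hom h (g ≫ w)
        rw [h2, hg]; exact sub_self _
      obtain ⟨ξ, hξ⟩ := (hex y (h - g ≫ w)).1 hker
      change y.unop ⟶ a₁ at ξ
      have hξ' : ξ ≫ fM = h - g ≫ w := hξ
      refine ⟨biprod.lift ξ g, ?_⟩
      show biprod.lift ξ g ≫ biprod.desc fM w = h
      rw [biprod.lift_desc, hξ']
      abel
    · rintro ⟨ζ, rfl⟩
      change y.unop ⟶ a₁ ⊞ c at ζ
      show (QBπ φ).app y (p.app y (ζ ≫ biprod.desc fM w)) = 0
      have hζ : ζ ≫ biprod.desc fM w = (ζ ≫ biprod.fst) ≫ fM + (ζ ≫ biprod.snd) ≫ w := by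
        conv_lhs => rw [show ζ = biprod.lift (ζ ≫ biprod.fst) (ζ ≫ biprod.snd) by
          apply biprod.hom_ext <;> simp]
        rw [biprod.lift_desc]
      rw [hζ]
      have hadd : p.app y ((ζ ≫ biprod.fst) ≫ fM + (ζ ≫ biprod.snd) ≫ w) =
          p.app y ((ζ ≫ biprod.fst) ≫ fM) + p.app y ((ζ ≫ biprod.snd) ≫ w) :=
        map_add (p.app y).hom _ _
      rw [hadd]
      have t1 : p.app y ((ζ ≫ biprod.fst) ≫ fM) = 0 := (hex y).apply_apply_eq_zero _
      have t2 : p.app y ((ζ ≫ biprod.snd) ≫ w) = φ.app y (ζ ≫ biprod.snd) :=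
        (hφval y _).symm
      rw [t1, t2, zero_add]
      rw [QBπ_eq_zero_iff]
      exact ⟨_, rfl⟩

end QB

section Compare

set_option linter.unusedSectionVars false
set_option maxHeartbeats 2000000

variable {R : Type u} [CommRing R]
variable {A : Type u} [SmallCategory A] [Preadditive A] [CategoryTheory.Linear R A]

lemma FP_fin {M : Mdl R A} (hM : FP R A M) (hFin : HomFinite R A) (y : Aᵒᵖ) :
    Module.Finite R (M.obj y) := by
  obtain ⟨a₁, a₀, fM, p, hp, _⟩ := hM
  haveI : Module.Finite R ((Pr R A a₀).obj y) := hFin y.unop a₀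
  exact Module.Finite.of_surjective (p.app y).hom (hp y)

lemma bij_endo_of_mono [IsArtinianRing R] {M : Mdl R A} (hM : FP R A M)
    (hFin : HomFinite R A) (θ : M ⟶ M) (h : MonoPt θ) (y : Aᵒᵖ) :
    Function.Bijective (θ.app y) := by
  haveI : Module.Finite R (M.obj y) := FP_fin hM hFin y
  haveI : IsArtinian R (M.obj y) := isArtinian_of_fg_of_artinian'
  exact ⟨h y, IsArtinian.surjective_of_injective_endomorphism (θ.app y).hom (h y)⟩

lemma zero_app_apply {M N : Mdl R A} (y : Aᵒᵖ) (u : M.obj y) :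
    (0 : M ⟶ N).app y u = 0 := by
  rw [NatTrans.app_zero]
  rfl

/-- representable covers of the kernels in an injective coresolution -/
lemma kernel_covers {a : A} {I : ℕ → Mdl R A} {η : Pr R A a ⟶ I 0}
    {f : ∀ i, I i ⟶ I (i + 1)}
    (hex0 : ExactAt η (f 0)) (hex : ∀ i, ExactAt (f i) (f (i + 1)))
    (hFP : ∀ i, FP R A (I i)) :
    ∀ k, ∃ (c : A) (g : Pr R A c ⟶ I k),
      ∀ (y : Aᵒᵖ) (u : (I k).obj y), (f k).app y u = 0 ↔ ∃ v, g.app y v = u := by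
  intro k
  cases k with
  | zero =>
    refine ⟨a, η, fun y u => ?_⟩
    rw [hex0 y u]
    exact Iff.rfl
  | succ k =>
    obtain ⟨b₁, b₀, fb, p, hp, _⟩ := hFP k
    refine ⟨b₀, p ≫ f k, fun y u => ?_⟩
    rw [hex k y u]
    constructor
    · rintro ⟨v, rfl⟩
      obtain ⟨g, rfl⟩ := hp y v
      exact ⟨g, rfl⟩
    · rintro ⟨g, rfl⟩
      exact ⟨p.app y g, rfl⟩

/-- The comparison morphisms between a minimal injective coresolution and any other
injective coresolution, with pointwise-bijective composite. -/
lemma comparison [IsArtinianRing R] [HasBinaryBiproducts A] (hFin : HomFinite R A)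
    {a : A} {I : ℕ → Mdl R A} {η : Pr R A a ⟶ I 0} {f : ∀ i, I i ⟶ I (i + 1)}
    (hmin : MinInjCores R A (Pr R A a) I η f)
    {I' : ℕ → Mdl R A} {η' : Pr R A a ⟶ I' 0} {f' : ∀ i, I' i ⟶ I' (i + 1)}
    (hm' : MonoPt η') (hex0' : ExactAt η' (f' 0)) (hex' : ∀ i, ExactAt (f' i) (f' (i + 1)))
    (hinj' : ∀ i, FPInjective R A (I' i)) :
    ∀ k, ∃ (φ : I k ⟶ I' k) (ψ : I' k ⟶ I k),
      (∀ (y : Aᵒᵖ) (u : (I k).obj y), (f k).app y u = 0 →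
        (f' k).app y (φ.app y u) = 0) ∧
      (∀ (y : Aᵒᵖ) (v : (I' k).obj y), (f' k).app y v = 0 →
        (f k).app y (ψ.app y v) = 0) ∧
      (∀ y, Function.Bijective ((φ ≫ ψ).app y)) := by
  obtain ⟨hmono, hex0, hex, hinj, hessη, hessk⟩ := hmin
  have hFP : ∀ i, FP R A (I i) := fun i => (hinj i).1
  have hFP' : ∀ i, FP R A (I' i) := fun i => (hinj' i).1
  have kc := kernel_covers hex0 hex hFP
  have kc' := kernel_covers hex0' hex' hFP'
  intro k
  induction k with
  | zero =>
    obtain ⟨φ, hφ⟩ := (hinj' 0).2 (Pr R A a) (I 0) (FP_Pr a) (hFP 0) η hmono η'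
    obtain ⟨ψ, hψ⟩ := (hinj 0).2 (Pr R A a) (I' 0) (FP_Pr a) (hFP' 0) η' hm' η
    have hθη : η ≫ (φ ≫ ψ) = η := by
      rw [← Category.assoc, hφ, hψ]
    refine ⟨φ, ψ, ?_, ?_, ?_⟩
    · intro y u hu
      obtain ⟨v, rfl⟩ := (hex0 y u).1 hu
      have h1 : φ.app y (η.app y v) = η'.app y v := hom_apply_eq hφ y v
      rw [h1]
      exact (hex0' y _).2 ⟨v, rfl⟩
    · intro y v hv
      obtain ⟨w, rfl⟩ := (hex0' y v).1 hv
      have h1 : ψ.app y (η'.app y w) = η.app y w := hom_apply_eq hψ y w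
      rw [h1]
      exact (hex0 y _).2 ⟨w, rfl⟩
    · have hmθ : MonoPt (φ ≫ ψ) := by
        apply hessη.2 (I 0) (hFP 0)
        rw [hθη]
        exact hmono
      exact bij_endo_of_mono (hFP 0) hFin (φ ≫ ψ) hmθ
  | succ k IH =>
    obtain ⟨φ, ψ, hiφ, hiψ, hbij⟩ := IH
    obtain ⟨c, G0, hG0⟩ := kc k
    obtain ⟨c', Gp, hGp⟩ := kc' k
    -- the map out of the cosyzygy on the unprimed side
    have hkill : ∀ (y : Aᵒᵖ) (g : y.unop ⟶ c), (f k).app y (G0.app y g) = 0 :=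
      fun y g => (hG0 y _).2 ⟨g, rfl⟩
    have hkill' : ∀ (y : Aᵒᵖ) (g : y.unop ⟶ c'), (f' k).app y (Gp.app y g) = 0 :=
      fun y g => (hGp y _).2 ⟨g, rfl⟩
    set C : Mdl R A := QB G0 with hC
    set C' : Mdl R A := QB Gp with hC'
    set gk : C ⟶ I (k + 1) := QBdesc G0 (f k) hkill with hgk
    set gk' : C' ⟶ I' (k + 1) := QBdesc Gp (f' k) hkill' with hgk'
    have hmgk : MonoPt gk := by
      intro y
      apply app_injective_of_ker
      intro u hu
      obtain ⟨v, rfl⟩ := QBπ_surj G0 y u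
      have : (f k).app y v = 0 := hu
      obtain ⟨g, hg⟩ := (hG0 y v).1 this
      exact (QBπ_eq_zero_iff G0 y v).2 ⟨g, hg⟩
    have hmgk' : MonoPt gk' := by
      intro y
      apply app_injective_of_ker
      intro u hu
      obtain ⟨v, rfl⟩ := QBπ_surj Gp y u
      have : (f' k).app y v = 0 := hu
      obtain ⟨g, hg⟩ := (hGp y v).1 this
      exact (QBπ_eq_zero_iff Gp y v).2 ⟨g, hg⟩
    have hFPC : FP R A C := FP_QB (hFP k) G0
    have hFPC' : FP R A C' := FP_QB (hFP' k) Gp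
    -- extend to the next stage
    have huφcond : ∀ (y : Aᵒᵖ) (g : y.unop ⟶ c), (φ ≫ f' k).app y (G0.app y g) = 0 := by
      intro y g
      show (f' k).app y (φ.app y (G0.app y g)) = 0
      exact hiφ y _ (hkill y g)
    have huψcond : ∀ (y : Aᵒᵖ) (g : y.unop ⟶ c'), (ψ ≫ f k).app y (Gp.app y g) = 0 := by
      intro y g
      show (f k).app y (ψ.app y (Gp.app y g)) = 0
      exact hiψ y _ (hkill' y g)
    obtain ⟨φ', hφ'⟩ := (hinj' (k + 1)).2 C (I (k + 1)) hFPC (hFP (k + 1)) gk hmgk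
      (QBdesc G0 (φ ≫ f' k) huφcond)
    obtain ⟨ψ', hψ'⟩ := (hinj (k + 1)).2 C' (I' (k + 1)) hFPC' (hFP' (k + 1)) gk' hmgk'
      (QBdesc Gp (ψ ≫ f k) huψcond)
    have hfφ : ∀ (y : Aᵒᵖ) (v : (I k).obj y),
        φ'.app y ((f k).app y v) = (f' k).app y (φ.app y v) := by
      intro y v
      have h1 : (f k).app y v = gk.app y ((QBπ G0).app y v) := rfl
      rw [h1]
      have h2 := hom_apply_eq hφ' y ((QBπ G0).app y v)
      exact h2
    have hfψ : ∀ (y : Aᵒᵖ) (v : (I' k).obj y),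
        ψ'.app y ((f' k).app y v) = (f k).app y (ψ.app y v) := by
      intro y v
      have h1 : (f' k).app y v = gk'.app y ((QBπ Gp).app y v) := rfl
      rw [h1]
      exact hom_apply_eq hψ' y ((QBπ Gp).app y v)
    refine ⟨φ', ψ', ?_, ?_, ?_⟩
    · intro y u hu
      obtain ⟨v, rfl⟩ := (hex k y u).1 hu
      rw [hfφ y v]
      exact (hex' k y _).2 ⟨φ.app y v, rfl⟩
    · intro y u hu
      obtain ⟨v, rfl⟩ := (hex' k y u).1 hu
      rw [hfψ y v]
      exact (hex k y _).2 ⟨ψ.app y v, rfl⟩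
    · -- the key minimality argument
      have hfθ : ∀ (y : Aᵒᵖ) (v : (I k).obj y),
          (φ' ≫ ψ').app y ((f k).app y v) = (f k).app y ((φ ≫ ψ).app y v) := by
        intro y v
        show ψ'.app y (φ'.app y ((f k).app y v)) = _
        rw [hfφ y v, hfψ y (φ.app y v)]
        rfl
      -- if f k (θ v) = 0 then f k v = 0
      have claim : ∀ (y : Aᵒᵖ) (v : (I k).obj y),
          (f k).app y ((φ ≫ ψ).app y v) = 0 → (f k).app y v = 0 := by
        intro y v hv
        haveI : Module.Finite R ((I k).obj y) := FP_fin (hFP k) hFin y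
        haveI : IsArtinian R ((I k).obj y) := isArtinian_of_fg_of_artinian'
        set T : Submodule R ((I k).obj y) := LinearMap.ker ((f k).app y).hom with hT
        have hmapT : ∀ x ∈ T, ((φ ≫ ψ).app y) x ∈ T := by
          intro x hx
          have h1 : (f k).app y x = 0 := hx
          show (f k).app y ((φ ≫ ψ).app y x) = 0
          show (f k).app y (ψ.app y (φ.app y x)) = 0
          exact hiψ y _ (hiφ y _ h1)
        have hres : Function.Injective (((φ ≫ ψ).app y).hom.restrict hmapT) := by
          intro s t hst
          apply Subtype.ext
          apply (hbij y).1
          have := congrArg Subtype.val hst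
          exact this
        have hsur : Function.Surjective (((φ ≫ ψ).app y).hom.restrict hmapT) :=
          IsArtinian.surjective_of_injective_endomorphism _ hres
        have hθvT : (φ ≫ ψ).app y v ∈ T := hv
        obtain ⟨t, ht⟩ := hsur ⟨(φ ≫ ψ).app y v, hθvT⟩
        have ht' : (φ ≫ ψ).app y t.val = (φ ≫ ψ).app y v := congrArg Subtype.val ht
        have : t.val = v := (hbij y).1 ht'
        rw [← this]
        exact t.property
      have hmθ' : MonoPt (φ' ≫ ψ') := by
        apply (hessk k).2 (I (k + 1)) (hFP (k + 1))
        intro y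
        apply app_injective_of_ker
        intro w hw
        have hι : (f (k + 1)).app y ((kernel.ι (f (k + 1))).app y w) = 0 := by
          have h0 := hom_apply_eq (kernel.condition (f (k + 1))) y w
          rw [zero_app_apply] at h0
          exact h0
        obtain ⟨v, hv⟩ := (hex k y _).1 hι
        have hw' : (φ' ≫ ψ').app y ((f k).app y v) = 0 := by
          rw [hv]; exact hw
        rw [hfθ y v] at hw'
        have : (f k).app y v = 0 := claim y v hw'
        have hz : (kernel.ι (f (k + 1))).app y w = 0 := by rw [← hv, this]
        have := (hessk k).1 y
        apply this
        rw [hz]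
        exact (map_zero _).symm
      exact bij_endo_of_mono (hFP (k + 1)) hFin (φ' ≫ ψ') hmθ' 

/-- From the comparison, each term of the minimal coresolution is a retract of the
corresponding term of the other coresolution. -/
lemma retract_of_comparison [IsArtinianRing R] [HasBinaryBiproducts A] (hFin : HomFinite R A)
    {a : A} {I : ℕ → Mdl R A} {η : Pr R A a ⟶ I 0} {f : ∀ i, I i ⟶ I (i + 1)}
    (hmin : MinInjCores R A (Pr R A a) I η f)
    {I' : ℕ → Mdl R A} {η' : Pr R A a ⟶ I' 0} {f' : ∀ i, I' i ⟶ I' (i + 1)}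
    (hm' : MonoPt η') (hex0' : ExactAt η' (f' 0)) (hex' : ∀ i, ExactAt (f' i) (f' (i + 1)))
    (hinj' : ∀ i, FPInjective R A (I' i)) (k : ℕ) :
    ∃ (s : I k ⟶ I' k) (r : I' k ⟶ I k), s ≫ r = 𝟙 (I k) := by
  obtain ⟨φ, ψ, _, _, hbij⟩ := comparison hFin hmin hm' hex0' hex' hinj' k
  set θ := φ ≫ ψ with hθ
  have hinv : ∃ θinv : I k ⟶ I k, θ ≫ θinv = 𝟙 (I k) := by
    refine ⟨{ app := fun y => ModuleCat.ofHom ((LinearEquiv.ofBijective (θ.app y).hom (hbij y)).symm :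
        (I k).obj y →ₗ[R] (I k).obj y), naturality := ?_ }, ?_⟩
    · intro y z ψm
      apply ModuleCat.hom_ext
      apply LinearMap.ext
      intro u
      apply (hbij z).1
      show θ.app z _ = θ.app z _
      have e1 : θ.app z (((LinearEquiv.ofBijective (θ.app z).hom (hbij z)).symm :
          (I k).obj z →ₗ[R] (I k).obj z) ((I k).map ψm u)) = (I k).map ψm u :=
        (LinearEquiv.ofBijective (θ.app z).hom (hbij z)).apply_symm_apply _
      have e2 : θ.app z ((I k).map ψm (((LinearEquiv.ofBijective (θ.app y).hom (hbij y)).symm :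
          (I k).obj y →ₗ[R] (I k).obj y) u)) = (I k).map ψm u := by
        rw [nat_apply θ ψm]
        congr 1
        exact (LinearEquiv.ofBijective (θ.app y).hom (hbij y)).apply_symm_apply _
      show θ.app z (((I k).map ψm ≫ _) u) = θ.app z ((_ ≫ (I k).map ψm) u)
      exact e1.trans e2.symm
    · apply NatTrans.ext
      funext y
      apply ModuleCat.hom_ext
      apply LinearMap.ext
      intro u
      show ((LinearEquiv.ofBijective (θ.app y).hom (hbij y)).symm :
          (I k).obj y →ₗ[R] (I k).obj y) (θ.app y u) = u
      exact (LinearEquiv.ofBijective (θ.app y).hom (hbij y)).symm_apply_apply _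
  obtain ⟨θinv, hθinv⟩ := hinv
  exact ⟨φ, ψ ≫ θinv, by rw [← Category.assoc]; exact hθinv⟩

lemma FGProj_of_retract {M N : Mdl R A} (h : FGProj R A N) (s : M ⟶ N) (r : N ⟶ M)
    (hr : s ≫ r = 𝟙 M) : FGProj R A M := by
  obtain ⟨cc, s', r', hsr'⟩ := h
  refine ⟨cc, s ≫ s', r' ≫ r, ?_⟩
  rw [Category.assoc, ← Category.assoc s', hsr', Category.id_comp, hr]

end Compare

section Part2

set_option linter.unusedSectionVars false
set_option maxHeartbeats 2000000

variable {R : Type u} [CommRing R]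
variable {A : Type u} [SmallCategory A] [Preadditive A] [CategoryTheory.Linear R A]

lemma isZero_elem {M : Mdl R A} (h : IsZero M) (x : Aᵒᵖ) (u : M.obj x) : u = 0 := by
  have h2 : IsZero (M.obj x) := (Functor.isZero_iff M).1 h x
  have h3 : (𝟙 (M.obj x) : M.obj x ⟶ M.obj x) = 0 := h2.eq_of_src _ _
  calc u = (𝟙 (M.obj x) : M.obj x ⟶ M.obj x) u := rfl
    _ = (0 : M.obj x ⟶ M.obj x) u := by rw [h3]
    _ = 0 := rfl

/-- Socle-style characterisation of an essential kernel: any nonzero element can be pushed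
to a nonzero element killed by `F`. -/
lemma essKer_of_essential [HasBinaryBiproducts A] {M N : Mdl R A} (F : M ⟶ N)
    (hM : FP R A M) (hess : IsEssentialMono R A (kernel.ι F)) :
    ∀ (x : Aᵒᵖ) (u : M.obj x), u ≠ 0 →
      ∃ (y : Aᵒᵖ) (φ : x ⟶ y), M.map φ u ≠ 0 ∧ F.app y (M.map φ u) = 0 := by
  intro x
  rcases x with ⟨c⟩
  intro u hu
  by_contra H
  push_neg at H
  set uh : Pr R A c ⟶ M := elt (eltLin_of_fp hM) u with huh
  have hmono : MonoPt (kernel.ι F ≫ QBπ uh) := by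
    intro y
    apply app_injective_of_ker
    intro w hw
    have h1 : (QBπ uh).app y ((kernel.ι F).app y w) = 0 := hw
    obtain ⟨g, hg⟩ := (QBπ_eq_zero_iff uh y _).1 h1
    have hFker : F.app y ((kernel.ι F).app y w) = 0 := by
      have h0 := hom_apply_eq (kernel.condition F) y w
      rw [zero_app_apply] at h0
      exact h0
    have hval : uh.app y g = M.map (Y := y) g.op u := rfl
    by_cases hz : M.map (Y := y) g.op u = 0
    · have hι0 : (kernel.ι F).app y w = 0 := by rw [← hg, hval, hz]
      apply hess.1 y
      rw [hι0, map_zero]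
    · exfalso
      apply H y g.op hz
      rw [show M.map (Y := y) g.op u = (kernel.ι F).app y w by rw [← hg]; rfl]
      exact hFker
  have hmπ : MonoPt (QBπ uh) := hess.2 (QB uh) (FP_QB hM uh) (QBπ uh) hmono
  apply hu
  apply hmπ (op c)
  rw [map_zero]
  exact (QBπ_eq_zero_iff uh (op c) u).2 ⟨𝟙 c, elt_app_id _ u⟩

lemma app_sum_apply {M N : Mdl R A} {ι : Type} (s : Finset ι) (α : ι → (M ⟶ N)) (y : Aᵒᵖ)
    (u : M.obj y) : (∑ j ∈ s, α j).app y u = ∑ j ∈ s, (α j).app y u := by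
  induction s using Finset.cons_induction with
  | empty => rw [Finset.sum_empty, Finset.sum_empty, zero_app_apply]
  | cons a s ha ih =>
    rw [Finset.sum_cons, Finset.sum_cons, NatTrans.app_add, ← ih]; rfl

lemma biprod_elem_zero {n : ℕ} {Mv : Fin n → Mdl R A} (y : Aᵒᵖ) (v : (⨁ Mv).obj y)
    (h : ∀ j, (biproduct.π Mv j).app y v = 0) : v = 0 := by
  have htot : (∑ j : Fin n, biproduct.π Mv j ≫ biproduct.ι Mv j) = 𝟙 (⨁ Mv) :=
    biproduct.total
  have h1 : (𝟙 (⨁ Mv) : (⨁ Mv) ⟶ (⨁ Mv)).app y v = v := rfl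
  rw [← htot, app_sum_apply] at h1
  rw [← h1]
  apply Finset.sum_eq_zero
  intro j _
  rw [comp_apply', h j, map_zero]

lemma essKer_biproduct {M N : Mdl R A} (F : M ⟶ N) (n : ℕ)
    (hF : ∀ (x : Aᵒᵖ) (u : M.obj x), u ≠ 0 →
      ∃ (y : Aᵒᵖ) (φ : x ⟶ y), M.map φ u ≠ 0 ∧ F.app y (M.map φ u) = 0)
    (x : Aᵒᵖ) (v : (⨁ fun _ : Fin n => M).obj x) (hv : v ≠ 0) :
    ∃ (y : Aᵒᵖ) (φ : x ⟶ y),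
      (⨁ fun _ : Fin n => M).map φ v ≠ 0 ∧
      (biproduct.map fun _ : Fin n => F).app y ((⨁ fun _ : Fin n => M).map φ v) = 0 := by
  have aux : ∀ m : ℕ, ∃ (y : Aᵒᵖ) (φ : x ⟶ y), (⨁ fun _ : Fin n => M).map φ v ≠ 0 ∧
      ∀ j : Fin n, (j : ℕ) < m →
        F.app y ((biproduct.π (fun _ : Fin n => M) j).app y ((⨁ fun _ : Fin n => M).map φ v)) = 0 := by
    intro m
    induction m with
    | zero =>
      refine ⟨x, 𝟙 x, fun h0 => hv ?_, fun j hj => absurd hj (Nat.not_lt_zero _)⟩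
      rw [(⨁ fun _ : Fin n => M).map_id] at h0
      exact h0
    | succ m IH =>
      obtain ⟨y, φ, hne, hall⟩ := IH
      by_cases hm : m < n
      · set j0 : Fin n := ⟨m, hm⟩ with hj0
        by_cases hz : F.app y ((biproduct.π (fun _ : Fin n => M) j0).app y ((⨁ fun _ : Fin n => M).map φ v)) = 0
        · refine ⟨y, φ, hne, fun j hj => ?_⟩
          rcases Nat.lt_succ_iff_lt_or_eq.1 hj with h | h
          · exact hall j h
          · have : j = j0 := Fin.ext h
            rw [this]
            exact hz
        · have hwne : (biproduct.π (fun _ : Fin n => M) j0).app y ((⨁ fun _ : Fin n => M).map φ v) ≠ 0 :=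
            fun h => hz (by rw [h, map_zero])
          obtain ⟨z, χ, h1, h2⟩ := hF y _ hwne
          have hcomm : ∀ j : Fin n,
              (biproduct.π (fun _ : Fin n => M) j).app z ((⨁ fun _ : Fin n => M).map χ ((⨁ fun _ : Fin n => M).map φ v)) =
              M.map χ ((biproduct.π (fun _ : Fin n => M) j).app y ((⨁ fun _ : Fin n => M).map φ v)) :=
            fun j => nat_apply (biproduct.π (fun _ : Fin n => M) j) χ ((⨁ fun _ : Fin n => M).map φ v)
          have hmapc : (⨁ fun _ : Fin n => M).map (φ ≫ χ) v = (⨁ fun _ : Fin n => M).map χ ((⨁ fun _ : Fin n => M).map φ v) := by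
            rw [(⨁ fun _ : Fin n => M).map_comp]; rfl
          refine ⟨z, φ ≫ χ, ?_, ?_⟩
          · rw [hmapc]
            intro h0
            apply h1
            rw [← hcomm j0, h0, map_zero]
          · intro j hj
            rw [hmapc, hcomm j]
            rcases Nat.lt_succ_iff_lt_or_eq.1 hj with h | h
            · have := hall j h
              rw [nat_apply F χ]
              rw [this, map_zero]
            · have : j = j0 := Fin.ext h
              rw [this]
              exact h2
      · refine ⟨y, φ, hne, fun j hj => hall j (lt_of_lt_of_le j.2 (Nat.le_of_not_lt hm))⟩
  obtain ⟨y, φ, hne, hall⟩ := aux n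
  refine ⟨y, φ, hne, ?_⟩
  apply biprod_elem_zero
  intro j
  have e : (biproduct.π (fun _ : Fin n => N) j).app y
      ((biproduct.map fun _ : Fin n => F).app y ((⨁ fun _ : Fin n => M).map φ v)) =
      F.app y ((biproduct.π (fun _ : Fin n => M) j).app y ((⨁ fun _ : Fin n => M).map φ v)) := by
    have h0 := hom_apply_eq (biproduct.map_π (fun _ : Fin n => F) j) y ((⨁ fun _ : Fin n => M).map φ v)
    exact h0
  rw [e]
  exact hall j j.2

end Part2




/-- for a `d`-Auslander dualizing `R`-variety and a minimal injective
coresolution `0 → P_a → I^0 → ⋯ → I^{d+1} → 0`, the terms `I^0, …, I^d` lie in `I^0(A)`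
and `I^0(A) ∩ add I^{d+1} = 0`. -/
theorem stmt18 (E : ModuleCat.{u} R) (hdual : IsDualizingVariety R A E)
    (d : ℕ) (hd : 1 ≤ d) (haus : IsDAuslander R A d)
    (a : A) (I : ℕ → Mdl R A) (η : Pr R A a ⟶ I 0) (f : ∀ i, I i ⟶ I (i + 1))
    (hmin : MinInjCores R A (Pr R A a) I η f)
    (hlen : ∀ i, d + 1 < i → IsZero (I i)) :
    (∀ k ≤ d, InI0 R A (I k)) ∧
    ∀ J : Mdl R A, InI0 R A J → InAddOf R A (I (d + 1)) J → IsZero J := by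
  haveI hBB : HasFiniteBiproducts A := hdual.hasBiproducts
  haveI : HasBinaryBiproducts A := hasBinaryBiproducts_of_finite_biproducts A
  have hFin : HomFinite R A := hdual.homFinite
  obtain ⟨hgl, hdom⟩ := haus
  constructor
  · -- Part 1 : I^k ∈ I^0(A) for k ≤ d
    intro k hk
    obtain ⟨I', η', f', hm', hex0', hexs', hinj', hproj'⟩ := hdom a
    obtain ⟨s, r, hsr⟩ := retract_of_comparison hFin hmin hm' hex0' hexs' hinj' k
    have hproj : FGProj R A (I k) := FGProj_of_retract (hproj' k hk) s r hsr
    obtain ⟨c, sI, rI, hIr⟩ := hproj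
    have hqq : (rI ≫ sI) ≫ (rI ≫ sI) = rI ≫ sI := by
      rw [Category.assoc, ← Category.assoc sI, hIr, Category.id_comp]
    set e : c ⟶ c := (rI ≫ sI).app (op c) (𝟙 c) with he
    have hq : rI ≫ sI = (linearYoneda R A).map e := by
      apply Pr_hom_ext
      show (rI ≫ sI).app (op c) (𝟙 c) = ((linearYoneda R A).map e).app (op c) (𝟙 c)
      show e = 𝟙 c ≫ e
      rw [Category.id_comp]
    have hee : e ≫ e = e := by
      have h1 : (linearYoneda R A).map (e ≫ e) = (linearYoneda R A).map e := by
        rw [Functor.map_comp, ← hq, hqq, hq]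
      have h2 := hom_apply_eq h1 (op c) (𝟙 c)
      have h3 : 𝟙 c ≫ (e ≫ e) = 𝟙 c ≫ e := h2
      rw [Category.id_comp, Category.id_comp] at h3
      exact h3
    obtain ⟨b, ib, pb, hip, hpi⟩ := hdual.idemSplit.idempotents_split c e hee
    set α : Pr R A b ⟶ I k := (linearYoneda R A).map ib ≫ rI with hα
    set β : I k ⟶ Pr R A b := sI ≫ (linearYoneda R A).map pb with hβ
    have hαβ : α ≫ β = 𝟙 (Pr R A b) := by
      rw [hα, hβ]
      rw [Category.assoc, ← Category.assoc rI sI, hq, ← Functor.map_comp, ← Functor.map_comp]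
      have hib : ib ≫ e ≫ pb = 𝟙 b := by
        rw [← hpi]
        calc ib ≫ (pb ≫ ib) ≫ pb = (ib ≫ pb) ≫ ib ≫ pb := by simp only [Category.assoc]
          _ = 𝟙 b := by rw [hip, Category.id_comp]
      rw [hib, CategoryTheory.Functor.map_id]
    have hβα : β ≫ α = 𝟙 (I k) := by
      rw [hβ, hα]
      rw [Category.assoc, ← Category.assoc ((linearYoneda R A).map pb), ← Functor.map_comp,
        hpi, ← hq]
      rw [← Category.assoc, ← Category.assoc, Category.assoc sI rI sI, ← Category.assoc sI rI,
        hIr, Category.id_comp, hIr]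
    have hmα : MonoPt α := by
      intro y u1 u2 h12
      have e1 : β.app y (α.app y u1) = u1 := hom_apply_eq hαβ y u1
      have e2 : β.app y (α.app y u2) = u2 := hom_apply_eq hαβ y u2
      exact e1.symm.trans ((congrArg (β.app y) h12).trans e2)
    have hmβ : MonoPt β := by
      intro y u1 u2 h12
      have e1 : α.app y (β.app y u1) = u1 := hom_apply_eq hβα y u1
      have e2 : α.app y (β.app y u2) = u2 := hom_apply_eq hβα y u2
      exact e1.symm.trans ((congrArg (α.app y) h12).trans e2)
    have henv : IsInjEnvelope R A α := by
      refine ⟨hmin.2.2.2.1 k, hmα, ?_⟩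
      intro Y hY G hm
      intro y u1 u2 h12
      have hGfact : β ≫ α ≫ G = G := by rw [← Category.assoc, hβα, Category.id_comp]
      have e1 : (α ≫ G).app y (β.app y u1) = G.app y u1 := hom_apply_eq hGfact y u1
      have e2 : (α ≫ G).app y (β.app y u2) = G.app y u2 := hom_apply_eq hGfact y u2
      have h3 : (α ≫ G).app y (β.app y u1) = (α ≫ G).app y (β.app y u2) := by
        rw [e1, e2]
        exact h12
      have h4 : β.app y u1 = β.app y u2 := hm y h3
      exact hmβ y h4
    exact ⟨1, fun _ => b, fun _ => I k, fun _ => α, fun _ => henv,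
      biproduct.ι (fun _ : Fin 1 => I k) 0, biproduct.π (fun _ : Fin 1 => I k) 0,
      biproduct.ι_π_self _ 0⟩
  · -- Part 2 : I^0(A) ∩ add I^{d+1} = 0
    intro J hJ hadd
    obtain ⟨nJ, b, Jv, ηv, henv, sJ, rJ, hsr⟩ := hJ
    obtain ⟨n, sA, rA, hsrA⟩ := hadd
    have hessd : IsEssentialMono R A (kernel.ι (f d)) := by
      obtain ⟨d', rfl⟩ : ∃ d', d = d' + 1 := ⟨d - 1, (Nat.succ_pred_eq_of_pos hd).symm⟩
      exact hmin.2.2.2.2.2 d' 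
    have hepifd : EpiPt (f d) := by
      intro x u
      have hz : (f (d + 1)).app x u = 0 := isZero_elem (hlen (d + 2) (by omega)) x _
      exact (hmin.2.2.1 d x u).1 hz
    have hessker := essKer_of_essential (f d) (hmin.2.2.2.1 d).1 hessd
    have hesskerF := essKer_biproduct (f d) n hessker
    have hret : ∀ i, ∃ (cv : A) (σ : Jv i ⟶ Pr R A cv) (ρ : Pr R A cv ⟶ Jv i),
        σ ≫ ρ = 𝟙 (Jv i) := by
      intro i
      obtain ⟨I', η', f', hm', hex0', hexs', hinj', hproj'⟩ := hdom (b i)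
      obtain ⟨h, hh⟩ := (hinj' 0).2 (Pr R A (b i)) (Jv i) (FP_Pr (b i)) (henv i).1.1 (ηv i)
        (henv i).2.1 η'
      have hmh : MonoPt h := (henv i).2.2 (I' 0) (hinj' 0).1 h (by rw [hh]; exact hm')
      obtain ⟨qq, hqq⟩ := (henv i).1.2 (Jv i) (I' 0) (henv i).1.1 (hinj' 0).1 h hmh (𝟙 (Jv i))
      obtain ⟨cv, s', r', hsr'⟩ := hproj' 0 (Nat.zero_le d)
      refine ⟨cv, h ≫ s', r' ≫ qq, ?_⟩
      rw [Category.assoc, ← Category.assoc s', hsr', Category.id_comp, hqq]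
    choose cv σv ρv hσρ using hret
    have hlift : ∀ i, ∃ ℓ : Jv i ⟶ (⨁ fun _ : Fin n => I d),
        ℓ ≫ (biproduct.map fun _ : Fin n => f d) = biproduct.ι Jv i ≫ rJ ≫ sA := by
      intro i
      set θi : Pr R A (cv i) ⟶ (⨁ fun _ : Fin n => I (d + 1)) :=
        ρv i ≫ biproduct.ι Jv i ≫ rJ ≫ sA with hθi
      have hcomp : ∀ j : Fin n, ∃ Λ : Pr R A (cv i) ⟶ I d,
          Λ ≫ f d = θi ≫ biproduct.π (fun _ : Fin n => I (d + 1)) j := by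
        intro j
        obtain ⟨w, hw⟩ := hepifd (op (cv i))
          ((θi ≫ biproduct.π (fun _ : Fin n => I (d + 1)) j).app (op (cv i)) (𝟙 (cv i)))
        refine ⟨elt (eltLin_of_fp (hmin.2.2.2.1 d).1) w, ?_⟩
        apply Pr_hom_ext
        show (f d).app _ ((elt _ w).app _ (𝟙 _)) = _
        rw [elt_app_id]
        exact hw
      choose Λ hΛ using hcomp
      refine ⟨σv i ≫ biproduct.lift Λ, ?_⟩
      rw [Category.assoc]
      have hLF : biproduct.lift Λ ≫ (biproduct.map fun _ : Fin n => f d) = θi := by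
        apply biproduct.hom_ext
        intro j
        rw [Category.assoc, biproduct.map_π, ← Category.assoc, biproduct.lift_π, hΛ j]
      rw [hLF, hθi, ← Category.assoc, hσρ i, Category.id_comp]
    choose ℓv hℓ using hlift
    set t : J ⟶ (⨁ fun _ : Fin n => I d) := sJ ≫ biproduct.desc ℓv with ht
    have htF : t ≫ (biproduct.map fun _ : Fin n => f d) = sA := by
      rw [ht, Category.assoc]
      have h1 : biproduct.desc ℓv ≫ (biproduct.map fun _ : Fin n => f d) = rJ ≫ sA := by
        apply biproduct.hom_ext'
        intro j
        rw [← Category.assoc, biproduct.ι_desc, hℓ j]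
      rw [h1, ← Category.assoc, hsr, Category.id_comp]
    have hsAmono : ∀ x, Function.Injective (sA.app x) := by
      intro x u1 u2 h12
      have e1 : rA.app x (sA.app x u1) = u1 := hom_apply_eq hsrA x u1
      have e2 : rA.app x (sA.app x u2) = u2 := hom_apply_eq hsrA x u2
      exact e1.symm.trans ((congrArg (rA.app x) h12).trans e2)
    apply Functor.isZero
    intro x
    haveI : Subsingleton (J.obj x) := by
      apply subsingleton_of_forall_eq (0 : J.obj x)
      intro u
      by_contra hu
      have hvne : t.app x u ≠ 0 := by
        intro h0
        apply hu
        apply hsAmono x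
        rw [map_zero]
        have e0 : sA.app x u = (t ≫ (biproduct.map fun _ : Fin n => f d)).app x u := by
          rw [htF]
        rw [e0, comp_apply', h0, map_zero]
      obtain ⟨y, φ, h1, h2⟩ := hesskerF x (t.app x u) hvne
      have e3 : (⨁ fun _ : Fin n => I d).map φ (t.app x u) = t.app y (J.map φ u) :=
        (nat_apply t φ u).symm
      rw [e3] at h1 h2
      have h4 : sA.app y (J.map φ u) = 0 := by
        have e4 : sA.app y (J.map φ u) =
            (t ≫ (biproduct.map fun _ : Fin n => f d)).app y (J.map φ u) := by rw [htF]
        rw [e4, comp_apply']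
        exact h2
      have h5 : J.map φ u = 0 := hsAmono y (by rw [h4, map_zero])
      apply h1
      rw [h5, map_zero]
    exact ModuleCat.isZero_of_subsingleton _


end DP
end
end
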